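/- arXiv:1302.6989 — 5 statements merged into one kernel-verified Lean document; each statement's English description precedes it below -/
import Mathlib

section
/- Let u = Σⱼ γⱼξⱼφⱼ with γⱼ = j^{−(s/d + 1/2 − 1/q)} δ^{−1/q}, ξⱼ i.i.d. with density ∝ exp(−|x|^q/2), 1 ≤ q < ∞, s > 0, δ > 0. If t < s − d/q then E exp(α ‖u‖_{X^{t,q}}^q) < ∞ for all α ∈ [0, δ/2), where ‖u‖_{X^{t,q}}^q = Σⱼ j^{tq/d + q/2 − 1} |uⱼ|^q. -/
open MeasureTheory ProbabilityTheory ENNReal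

lemma aux_integrable {p b r : ℝ} (hr : 0 ≤ r) (hp : 1 ≤ p) (hb : 0 < b) :
    Integrable (fun x : ℝ => |x| ^ r * Real.exp (-b * |x| ^ p)) := by
  have base : IntegrableOn (fun x : ℝ => x ^ r * Real.exp (-b * x ^ p)) (Set.Ioi 0) :=
    integrableOn_rpow_mul_exp_neg_mul_rpow (by linarith) (by linarith) hb
  have hIoi : IntegrableOn (fun x : ℝ => |x| ^ r * Real.exp (-b * |x| ^ p)) (Set.Ioi 0) :=
    base.congr_fun (fun x hx => by rw [abs_of_pos hx]) measurableSet_Ioi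
  rw [← integrableOn_univ, ← Set.Iio_union_Ici (a := (0:ℝ)), integrableOn_union,
    integrableOn_Ici_iff_integrableOn_Ioi]
  refine ⟨?_, hIoi⟩
  rw [← (Measure.measurePreserving_neg (volume : Measure ℝ)).integrableOn_comp_preimage
      (Homeomorph.neg ℝ).measurableEmbedding]
  simp only [Function.comp_def, abs_neg, Set.neg_preimage, Set.neg_Iio, neg_zero]
  exact hIoi

lemma aux_exp_le {y z : ℝ} (hy : 0 ≤ y) (hyz : y ≤ z) :
    Real.exp y ≤ 1 + y * Real.exp z := by
  have h1 := Real.add_one_le_exp (-y)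
  have h2 : Real.exp (-y) * Real.exp y = 1 := by rw [← Real.exp_add]; simp
  have h3 : Real.exp y ≤ Real.exp z := Real.exp_le_exp.2 hyz
  nlinarith [Real.exp_pos y, Real.exp_pos z]

/-- **Besov priors: exponential integrability.**  Let `u = ∑_j γ j ξ j φ j` with
`γ j = j^{-(s/d + 1/2 - 1/q)} δ^{-1/q}` and `(ξ j)` i.i.d. with density proportional to
`exp(-|x|^q/2)`, `1 ≤ q < ∞`, `s > 0`, `δ > 0`.  If `t < s - d/q`, then
`E exp(α ‖u‖_{X^{t,q}}^q) < ∞` for every `α ∈ [0, δ/2)`, where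
`‖u‖_{X^{t,q}}^q = ∑_j j^{tq/d + q/2 - 1} |u_j|^q = ∑_j δ⁻¹ j^{-(s-t)q/d} |ξ j|^q`. -/
theorem besov_prior_exp_integrable
    (d : ℕ) (hd : 0 < d) (q s δ t : ℝ) (hq : 1 ≤ q) (hs : 0 < s) (hδ : 0 < δ)
    (ht : t < s - d / q)
    (c : ℝ) (hc : c = (∫ x : ℝ, Real.exp (-|x| ^ q / 2))⁻¹)
    (Ω : Type*) [MeasurableSpace Ω] (P : Measure Ω) [IsProbabilityMeasure P]
    (ξ : ℕ → Ω → ℝ) (hξm : ∀ j, Measurable (ξ j))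
    (hξindep : iIndepFun ξ P)
    (hξlaw : ∀ j, Measure.map (ξ j) P
      = volume.withDensity fun x => ENNReal.ofReal (c * Real.exp (-|x| ^ q / 2)))
    -- the coefficients `γ j` and the `X^{t,q}`-norm of `u`, indexed so that `j ≥ 1`:
    (γ : ℕ → ℝ) (hγ : ∀ j : ℕ, γ (j + 1) = (j + 1 : ℝ) ^ (-(s / d + 1 / 2 - 1 / q)) * δ ^ (-(1 / q)))
    (normq : Ω → ℝ)
    (hnorm : normq = fun ω => ∑' j : ℕ,
      ((j + 1 : ℝ) ^ (t * q / d + q / 2 - 1)) * |γ (j + 1) * ξ (j + 1) ω| ^ q)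
    (α : ℝ) (hα0 : 0 ≤ α) (hα : α < δ / 2) :
    Integrable (fun ω => Real.exp (α * normq ω)) P := by
  have hq0 : (0:ℝ) < q := lt_of_lt_of_le one_pos hq
  have hq0' : q ≠ 0 := ne_of_gt hq0
  have hd0 : (0:ℝ) < (d:ℝ) := by exact_mod_cast hd
  set r : ℝ := (s - t) * q / d with hr_def
  have hr1 : 1 < r := by
    rw [hr_def, lt_div_iff₀ hd0, one_mul]
    have h1 : (d:ℝ) / q < s - t := by linarith
    calc (d:ℝ) = (d / q) * q := by field_simp
    _ < (s - t) * q := mul_lt_mul_of_pos_right h1 hq0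
  have hr0 : 0 < r := lt_trans one_pos hr1
  set a : ℕ → ℝ := fun j => δ⁻¹ * (j:ℝ) ^ (-r) with ha_def
  have ha_nonneg : ∀ j, 0 ≤ a j := fun j =>
    mul_nonneg (inv_nonneg.2 hδ.le) (Real.rpow_nonneg (Nat.cast_nonneg j) _)
  have ha_le : ∀ j, a j ≤ δ⁻¹ := by
    intro j
    rcases Nat.eq_zero_or_pos j with h | h
    · subst h
      simp only [ha_def, Nat.cast_zero, Real.zero_rpow (neg_ne_zero.2 hr0.ne'), mul_zero]
      positivity
    · have h1 : (1:ℝ) ≤ (j:ℝ) := by exact_mod_cast h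
      have h2 : (j:ℝ) ^ (-r) ≤ 1 :=
        Real.rpow_le_one_of_one_le_of_nonpos h1 (by linarith)
      calc a j = δ⁻¹ * (j:ℝ)^(-r) := rfl
      _ ≤ δ⁻¹ * 1 := mul_le_mul_of_nonneg_left h2 (inv_nonneg.2 hδ.le)
      _ = δ⁻¹ := mul_one _
  -- key pointwise identity for the summands
  have hterm : ∀ (j : ℕ) (x : ℝ),
      ((j + 1 : ℝ) ^ (t * q / d + q / 2 - 1)) * |γ (j + 1) * x| ^ q
        = a (j + 1) * |x| ^ q := by
    intro j x
    have hj1 : (0:ℝ) < (j:ℝ) + 1 := by positivity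
    have h2 : |((j:ℝ)+1) ^ (-(s / d + 1 / 2 - 1 / q)) * δ ^ (-(1 / q))|
        = ((j:ℝ)+1) ^ (-(s / d + 1 / 2 - 1 / q)) * δ ^ (-(1 / q)) := by
      apply abs_of_pos
      positivity
    have e1 : |γ (j+1) * x| ^ q
        = ((j:ℝ)+1) ^ (-(s/d+1/2-1/q)*q) * (δ⁻¹ * |x| ^ q) := by
      rw [hγ j, abs_mul, h2, Real.mul_rpow (by positivity) (abs_nonneg x),
          Real.mul_rpow (by positivity) (by positivity),
          ← Real.rpow_mul hj1.le, ← Real.rpow_mul hδ.le,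
          show -(1/q) * q = -1 by field_simp, Real.rpow_neg_one]
      ring
    have key : t * q / d + q / 2 - 1 + (-(s/d+1/2-1/q)*q) = -r := by
      rw [hr_def]; field_simp; ring
    rw [e1, ← mul_assoc, ← Real.rpow_add hj1, key]
    have : ((j:ℕ) + 1 : ℝ) = ((j:ℝ) + 1) := by push_cast; ring
    rw [ha_def]
    push_cast
    ring
  -- basic constants
  have hβ0 : α * δ⁻¹ < 1/2 := by
    rw [show α * δ⁻¹ = α / δ by rw [div_eq_mul_inv], div_lt_iff₀ hδ]
    linarith
  set ε : ℝ := 1/2 - α * δ⁻¹ with hε_def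
  have hε : 0 < ε := by simp only [hε_def]; linarith
  have hJint : Integrable (fun x : ℝ => Real.exp (-|x| ^ q / 2)) := by
    have h := aux_integrable (r := 0) (b := 1/2) le_rfl hq (by norm_num)
    have he : (fun x : ℝ => |x| ^ (0:ℝ) * Real.exp (-(1/2) * |x| ^ q))
        = fun x : ℝ => Real.exp (-|x| ^ q / 2) := by
      funext x; rw [Real.rpow_zero, one_mul]; congr 1; ring
    rwa [he] at h
  have hJpos : 0 < ∫ x : ℝ, Real.exp (-|x| ^ q / 2) := by
    rw [integral_pos_iff_support_of_nonneg (fun x => (Real.exp_pos _).le) hJint]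
    have hsupp : Function.support (fun x : ℝ => Real.exp (-|x| ^ q / 2)) = Set.univ := by
      ext x; simp [Function.support, (Real.exp_pos _).ne']
    rw [hsupp]
    simp
  have hc_pos : 0 < c := by rw [hc]; exact inv_pos.2 hJpos
  have hM0int : Integrable (fun x : ℝ => |x| ^ q * Real.exp (-ε * |x| ^ q)) :=
    aux_integrable hq0.le hq hε
  set M0 : ℝ := ∫ x : ℝ, |x| ^ q * Real.exp (-ε * |x| ^ q) with hM0_def
  have hM0nonneg : 0 ≤ M0 :=
    integral_nonneg fun x => mul_nonneg (Real.rpow_nonneg (abs_nonneg _) _) (Real.exp_pos _).le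
  set M : ℝ := c * M0 with hM_def
  have hMnonneg : 0 ≤ M := mul_nonneg hc_pos.le hM0nonneg
  -- per-factor bound
  have hcontg : ∀ β : ℝ, Continuous fun x : ℝ => Real.exp (β * |x| ^ q) :=
    fun β => (continuous_const.mul ((Real.continuous_rpow_const hq0.le).comp continuous_abs)).rexp
  set F : ℕ → Ω → ℝ≥0∞ :=
    fun j ω => ENNReal.ofReal (Real.exp ((α * a j) * |ξ j ω| ^ q)) with hF_def
  have hFbound : ∀ j, (∫⁻ ω, F j ω ∂P) ≤ ENNReal.ofReal (Real.exp ((α * a j) * M)) := by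
    intro j
    simp only [hF_def]
    set β := α * a j with hβ_def
    have hβnn : 0 ≤ β := mul_nonneg hα0 (ha_nonneg j)
    have hββ0 : β ≤ α * δ⁻¹ := mul_le_mul_of_nonneg_left (ha_le j) hα0
    have hmg : Measurable (fun x : ℝ => ENNReal.ofReal (Real.exp (β * |x| ^ q))) :=
      ENNReal.measurable_ofReal.comp (hcontg β).measurable
    have hdm : Measurable (fun x : ℝ => ENNReal.ofReal (c * Real.exp (-|x| ^ q / 2))) := by
      apply ENNReal.measurable_ofReal.comp
      exact (continuous_const.mul (((Real.continuous_rpow_const hq0.le).comp continuous_abs).neg.div_const 2).rexp).measurable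
    have step1 : (∫⁻ ω, ENNReal.ofReal (Real.exp (β * |ξ j ω| ^ q)) ∂P)
        = ∫⁻ x, ENNReal.ofReal (c * Real.exp (-|x| ^ q / 2))
            * ENNReal.ofReal (Real.exp (β * |x| ^ q)) ∂volume := by
      rw [← lintegral_map hmg (hξm j), hξlaw j,
        lintegral_withDensity_eq_lintegral_mul _ hdm hmg]
      rfl
    rw [step1]
    set h : ℝ → ℝ := fun x => c * Real.exp (-|x| ^ q / 2)
        + β * (c * (|x| ^ q * Real.exp (-ε * |x| ^ q))) with hh_def
    have hpt : ∀ x : ℝ, ENNReal.ofReal (c * Real.exp (-|x| ^ q / 2))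
        * ENNReal.ofReal (Real.exp (β * |x| ^ q)) ≤ ENNReal.ofReal (h x) := by
      intro x
      rw [← ENNReal.ofReal_mul (by positivity)]
      apply ENNReal.ofReal_le_ofReal
      set u := |x| ^ q with hu_def
      have hu : 0 ≤ u := Real.rpow_nonneg (abs_nonneg _) _
      have h1 : Real.exp (β * u) ≤ 1 + (β * u) * Real.exp ((α * δ⁻¹) * u) :=
        aux_exp_le (mul_nonneg hβnn hu) (mul_le_mul_of_nonneg_right hββ0 hu)
      have h2 : Real.exp (-u/2) * Real.exp ((α * δ⁻¹) * u) = Real.exp (-ε * u) := by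
        rw [← Real.exp_add]; congr 1; rw [hε_def]; ring
      calc c * Real.exp (-u/2) * Real.exp (β * u)
          ≤ c * Real.exp (-u/2) * (1 + (β * u) * Real.exp ((α * δ⁻¹) * u)) := by
            apply mul_le_mul_of_nonneg_left h1 (by positivity)
        _ = c * Real.exp (-u/2)
            + β * (c * (u * (Real.exp (-u/2) * Real.exp ((α * δ⁻¹) * u)))) := by ring
        _ = h x := by rw [h2]
    have hint : Integrable h := by
      apply Integrable.add (hJint.const_mul c)
      exact ((hM0int.const_mul c).const_mul β)
    have hhnn : 0 ≤ᵐ[volume] h := by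
      filter_upwards with x
      have : 0 ≤ h x := by
        apply add_nonneg (by positivity)
        apply mul_nonneg hβnn
        positivity
      exact this
    calc (∫⁻ x, ENNReal.ofReal (c * Real.exp (-|x| ^ q / 2))
            * ENNReal.ofReal (Real.exp (β * |x| ^ q)) ∂volume)
        ≤ ∫⁻ x, ENNReal.ofReal (h x) ∂volume := lintegral_mono hpt
      _ = ENNReal.ofReal (∫ x, h x) := (ofReal_integral_eq_lintegral_ofReal hint hhnn).symm
      _ ≤ ENNReal.ofReal (Real.exp (β * M)) := by
        apply ENNReal.ofReal_le_ofReal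
        have hint_eq : ∫ x, h x = 1 + β * M := by
          rw [hh_def]
          rw [integral_add (hJint.const_mul c) ((hM0int.const_mul c).const_mul β),
            integral_const_mul, integral_const_mul, integral_const_mul, ← hM0_def]
          have hcJ : c * ∫ x : ℝ, Real.exp (-|x| ^ q / 2) = 1 := by
            rw [hc]; exact inv_mul_cancel₀ hJpos.ne'
          rw [hcJ, ← hM_def]
        rw [hint_eq]
        have := Real.add_one_le_exp (β * M)
        linarith
  have hFm : ∀ j, Measurable (F j) := fun j =>
    (ENNReal.measurable_ofReal.comp (hcontg (α * a j)).measurable).comp (hξm j)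
  have hFindep : iIndepFun F P := by
    apply hξindep.comp (fun j x => ENNReal.ofReal (Real.exp ((α * a j) * |x| ^ q)))
    exact fun j => ENNReal.measurable_ofReal.comp (hcontg (α * a j)).measurable
  have hIprod : ∀ sfin : Finset ℕ,
      ∫⁻ ω, ∏ j ∈ sfin, F j ω ∂P = ∏ j ∈ sfin, ∫⁻ ω, F j ω ∂P := by
    intro sfin
    induction sfin using Finset.induction_on with
    | empty => simp
    | @insert i s2 hi ih =>
      have hind : IndepFun (∏ j ∈ s2, F j) (F i) P :=
        hFindep.indepFun_finsetProd_of_notMem hFm hi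
      have hmp : Measurable (∏ j ∈ s2, F j) := by
        have := Finset.measurable_prod s2 (fun j (_ : j ∈ s2) => hFm j)
        convert this using 1
        funext ω; simp [Finset.prod_apply]
      calc ∫⁻ ω, ∏ j ∈ insert i s2, F j ω ∂P
          = ∫⁻ ω, ((∏ j ∈ s2, F j) * F i) ω ∂P := by
            apply lintegral_congr; intro ω
            simp [Finset.prod_insert hi, mul_comm]
        _ = (∫⁻ ω, (∏ j ∈ s2, F j) ω ∂P) * ∫⁻ ω, F i ω ∂P :=
            lintegral_mul_eq_lintegral_mul_lintegral_of_indepFun hmp (hFm i) hind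
        _ = (∏ j ∈ s2, ∫⁻ ω, F j ω ∂P) * ∫⁻ ω, F i ω ∂P := by
            rw [← ih]; congr 1; apply lintegral_congr; intro ω
            simp [Finset.prod_apply]
        _ = ∏ j ∈ insert i s2, ∫⁻ ω, F j ω ∂P := by
            rw [Finset.prod_insert hi, mul_comm]
  -- summability of the coefficients
  have hasum : Summable (fun j : ℕ => (j:ℝ) ^ (-r)) :=
    Real.summable_nat_rpow.2 (by linarith)
  set K : ℝ := ∑' j : ℕ, (j:ℝ) ^ (-r) with hK_def
  have hsum_a : ∀ n : ℕ, ∑ j ∈ Finset.range n, a j ≤ δ⁻¹ * K := by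
    intro n
    have e : ∑ j ∈ Finset.range n, a j = δ⁻¹ * ∑ j ∈ Finset.range n, (j:ℝ)^(-r) := by
      rw [Finset.mul_sum]
    rw [e]
    apply mul_le_mul_of_nonneg_left _ (inv_nonneg.2 hδ.le)
    exact Summable.sum_le_tsum _ (fun j _ => Real.rpow_nonneg (Nat.cast_nonneg j) _) hasum
  set B : ℝ≥0∞ := ENNReal.ofReal (Real.exp (α * δ⁻¹ * K * M)) with hB_def
  have hprod_le : ∀ n : ℕ, (∏ j ∈ Finset.range n, ∫⁻ ω, F j ω ∂P) ≤ B := by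
    intro n
    calc (∏ j ∈ Finset.range n, ∫⁻ ω, F j ω ∂P)
        ≤ ∏ j ∈ Finset.range n, ENNReal.ofReal (Real.exp ((α * a j) * M)) :=
          Finset.prod_le_prod' fun j _ => hFbound j
      _ = ENNReal.ofReal (∏ j ∈ Finset.range n, Real.exp ((α * a j) * M)) :=
          (ENNReal.ofReal_prod_of_nonneg fun j _ => (Real.exp_pos _).le).symm
      _ = ENNReal.ofReal (Real.exp (∑ j ∈ Finset.range n, (α * a j) * M)) := by
          rw [Real.exp_sum]
      _ ≤ B := by
          apply ENNReal.ofReal_le_ofReal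
          apply Real.exp_le_exp.2
          have e : ∑ j ∈ Finset.range n, (α * a j) * M
              = α * M * ∑ j ∈ Finset.range n, a j := by
            rw [Finset.mul_sum]; apply Finset.sum_congr rfl; intro j _; ring
          rw [e]
          calc α * M * ∑ j ∈ Finset.range n, a j ≤ α * M * (δ⁻¹ * K) :=
                mul_le_mul_of_nonneg_left (hsum_a n) (by positivity)
            _ = α * δ⁻¹ * K * M := by ring
  -- the monotone approximations
  set g : ℕ → Ω → ℝ≥0∞ := fun n ω => ∏ j ∈ Finset.range n, F j ω with hg_def
  have hgm : ∀ n, Measurable (g n) := fun n =>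
    Finset.measurable_prod _ fun j _ => hFm j
  have hgmono : ∀ m n : ℕ, m ≤ n → ∀ ω, g m ω ≤ g n ω := by
    intro m n hmn ω
    apply Finset.prod_le_prod_of_subset_of_one_le' (Finset.range_subset_range.2 hmn)
    intro j _ _
    rw [hF_def]
    have h1 : (1:ℝ) ≤ Real.exp ((α * a j) * |ξ j ω| ^ q) := by
      apply Real.one_le_exp
      have : 0 ≤ |ξ j ω| ^ q := Real.rpow_nonneg (abs_nonneg _) _
      exact mul_nonneg (mul_nonneg hα0 (ha_nonneg j)) this
    exact ENNReal.one_le_ofReal.2 h1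
  have hgn : ∀ n ω, g n ω
      = ENNReal.ofReal (Real.exp (∑ j ∈ Finset.range n, α * (a j * |ξ j ω| ^ q))) := by
    intro n ω
    simp only [hg_def, hF_def]
    rw [← ENNReal.ofReal_prod_of_nonneg (fun j _ => (Real.exp_pos _).le), ← Real.exp_sum]
    exact congrArg ENNReal.ofReal
      (congrArg Real.exp (Finset.sum_congr rfl fun j _ => by ring))
  have hGle : ∫⁻ ω, (⨆ n, g n ω) ∂P ≤ B := by
    rw [lintegral_iSup hgm fun m n hmn ω => hgmono m n hmn ω]
    apply iSup_le; intro n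
    calc ∫⁻ ω, g n ω ∂P = ∏ j ∈ Finset.range n, ∫⁻ ω, F j ω ∂P := hIprod _
      _ ≤ B := hprod_le n
  have ha0 : a 0 = 0 := by
    simp [ha_def, Real.zero_rpow (neg_ne_zero.2 hr0.ne')]
  have hnormq_eq : ∀ ω, normq ω = ∑' j : ℕ, a (j+1) * |ξ (j+1) ω| ^ q := by
    intro ω
    rw [hnorm]
    exact tsum_congr fun j => hterm j (ξ (j+1) ω)
  -- pointwise domination
  have hdom : ∀ ω, ENNReal.ofReal (Real.exp (α * normq ω)) ≤ ⨆ n, g n ω := by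
    intro ω
    by_cases hsum : Summable (fun j : ℕ => a (j+1) * |ξ (j+1) ω| ^ q)
    · have hsum0 : Summable (fun j : ℕ => a j * |ξ j ω| ^ q) :=
        (_root_.summable_nat_add_iff 1).mp hsum
      have hsumα : Summable (fun j : ℕ => α * (a j * |ξ j ω| ^ q)) := hsum0.mul_left α
      have hS : α * normq ω = ∑' j : ℕ, α * (a j * |ξ j ω| ^ q) := by
        rw [hnormq_eq ω, Summable.tsum_eq_zero_add hsumα, ha0]
        simp only [zero_mul, mul_zero, zero_add]
        rw [← tsum_mul_left]
      set S := ∑' j : ℕ, α * (a j * |ξ j ω| ^ q) with hS_def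
      have htend : Filter.Tendsto (fun n => ∑ j ∈ Finset.range n, α * (a j * |ξ j ω| ^ q))
          Filter.atTop (nhds S) := hsumα.hasSum.tendsto_sum_nat
      have htend2 : Filter.Tendsto (fun n => g n ω) Filter.atTop
          (nhds (ENNReal.ofReal (Real.exp S))) := by
        have h := (ENNReal.continuous_ofReal.tendsto _).comp
          ((Real.continuous_exp.tendsto _).comp htend)
        have he : (fun n => g n ω)
            = (ENNReal.ofReal ∘ (Real.exp ∘ fun n => ∑ j ∈ Finset.range n,
                α * (a j * |ξ j ω| ^ q))) := by
          funext n; simp [hgn n ω, Function.comp]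
        rw [he]
        exact h
      have hiSup : (⨆ n, g n ω) = ENNReal.ofReal (Real.exp S) :=
        tendsto_nhds_unique (tendsto_atTop_iSup fun m n hmn => hgmono m n hmn ω) htend2
      rw [hS, hiSup]
    · rw [hnormq_eq ω, tsum_eq_zero_of_not_summable hsum]
      calc ENNReal.ofReal (Real.exp (α * 0)) = 1 := by norm_num
        _ = g 0 ω := by simp [hg_def]
        _ ≤ ⨆ n, g n ω := le_iSup (fun n => g n ω) 0
  -- measurability of normq
  have hnm : Measurable normq := by
    rw [hnorm]
    have heq : (fun ω => ∑' j : ℕ,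
        ((j + 1 : ℝ) ^ (t * q / d + q / 2 - 1)) * |γ (j + 1) * ξ (j + 1) ω| ^ q)
        = fun ω => (∑' j : ℕ, ENNReal.ofReal (a (j+1) * |ξ (j+1) ω| ^ q)).toReal := by
      funext ω
      rw [tsum_congr (fun j => hterm j (ξ (j+1) ω))]
      have hnn : ∀ j : ℕ, 0 ≤ a (j+1) * |ξ (j+1) ω| ^ q :=
        fun j => mul_nonneg (ha_nonneg _) (Real.rpow_nonneg (abs_nonneg _) _)
      by_cases hsum : Summable (fun j : ℕ => a (j+1) * |ξ (j+1) ω| ^ q)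
      · rw [← ENNReal.ofReal_tsum_of_nonneg hnn hsum,
          ENNReal.toReal_ofReal (tsum_nonneg hnn)]
      · rw [tsum_eq_zero_of_not_summable hsum]
        have htop : (∑' j : ℕ, ENNReal.ofReal (a (j+1) * |ξ (j+1) ω| ^ q)) = ⊤ := by
          by_contra hfin
          apply hsum
          have := ENNReal.summable_toReal hfin
          refine this.congr fun j => ?_
          rw [ENNReal.toReal_ofReal (hnn j)]
        rw [htop]
        simp
    rw [heq]
    apply Measurable.ennreal_toReal
    apply Measurable.ennreal_tsum
    intro j
    apply ENNReal.measurable_ofReal.comp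
    exact ((continuous_const.mul
      ((Real.continuous_rpow_const hq0.le).comp continuous_abs)).measurable).comp (hξm (j+1))
  -- conclusion
  constructor
  · exact (Real.measurable_exp.comp (hnm.const_mul α)).aestronglyMeasurable
  · rw [hasFiniteIntegral_iff_norm]
    have hle : (∫⁻ ω, ENNReal.ofReal ‖Real.exp (α * normq ω)‖ ∂P)
        ≤ ∫⁻ ω, (⨆ n, g n ω) ∂P := by
      apply lintegral_mono
      intro ω
      show ENNReal.ofReal ‖Real.exp (α * normq ω)‖ ≤ ⨆ n, g n ω
      rw [Real.norm_eq_abs, abs_of_pos (Real.exp_pos _)]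
      exact hdom ω
    exact lt_of_le_of_lt (le_trans hle hGle) ENNReal.ofReal_lt_top
end

section
/- Conversely, if ‖u‖_{X^{t,q}} < ∞ almost surely for the Besov-type random series u = Σⱼ γⱼξⱼφⱼ, then t < s − d/q. -/
open MeasureTheory ProbabilityTheory Filter Finset Topology

lemma besov_aux_det (z : ℕ → ℝ) (hz0 : ∀ j, 0 ≤ z j) (m : ℝ) (hm : 0 < m)
    (hlim : Tendsto (fun n : ℕ => (∑ i ∈ Finset.range n, z i) / n) atTop (𝓝 m)) :
    ¬ Summable (fun j : ℕ => ((j : ℝ) + 1)⁻¹ * z j) := by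
  intro hsum
  set f : ℕ → ℝ := fun j => ((j : ℝ) + 1)⁻¹ * z j with hf
  have hP : Tendsto (fun n : ℕ => ∑ i ∈ Finset.range n, f i) atTop (𝓝 (∑' i, f i)) :=
    hsum.hasSum.tendsto_sum_nat
  have h2 : Tendsto (fun k : ℕ => (2 : ℕ) ^ k) atTop atTop :=
    tendsto_pow_atTop_atTop_of_one_lt one_lt_two
  have h2' : Tendsto (fun k : ℕ => (2 : ℕ) ^ (k + 1)) atTop atTop :=
    h2.comp (tendsto_add_atTop_nat 1)
  have hD : Tendsto (fun k : ℕ => (∑ i ∈ Finset.range (2 ^ (k + 1)), f i)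
      - ∑ i ∈ Finset.range (2 ^ k), f i) atTop (𝓝 0) := by
    have := (hP.comp h2').sub (hP.comp h2)
    simpa using this
  have hS1 : Tendsto (fun k : ℕ => (∑ i ∈ Finset.range (2 ^ (k + 1)), z i) / (2 ^ (k + 1) : ℕ))
      atTop (𝓝 m) := hlim.comp h2'
  have hS2 : Tendsto (fun k : ℕ => (∑ i ∈ Finset.range (2 ^ k), z i) / (2 ^ k : ℕ))
      atTop (𝓝 m) := hlim.comp h2
  have hE : Tendsto (fun k : ℕ =>
      (∑ i ∈ Finset.range (2 ^ (k + 1)), z i) / (2 ^ (k + 1) : ℕ)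
      - ((∑ i ∈ Finset.range (2 ^ k), z i) / (2 ^ k : ℕ)) / 2) atTop (𝓝 (m - m / 2)) :=
    hS1.sub (hS2.div_const 2)
  have hbound : ∀ k : ℕ,
      (∑ i ∈ Finset.range (2 ^ (k + 1)), z i) / (2 ^ (k + 1) : ℕ)
      - ((∑ i ∈ Finset.range (2 ^ k), z i) / (2 ^ k : ℕ)) / 2
      ≤ (∑ i ∈ Finset.range (2 ^ (k + 1)), f i) - ∑ i ∈ Finset.range (2 ^ k), f i := by
    intro k
    have hle : (2 : ℕ) ^ k ≤ 2 ^ (k + 1) := Nat.pow_le_pow_right (by norm_num) (Nat.le_succ k)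
    have hzsub : (∑ i ∈ Finset.range (2 ^ k), z i) / (2 ^ k : ℕ) / 2
        = (∑ i ∈ Finset.range (2 ^ k), z i) / (2 ^ (k + 1) : ℕ) := by
      push_cast
      rw [pow_succ]
      ring
    rw [hzsub, div_sub_div_same, ← Finset.sum_Ico_eq_sub _ hle, ← Finset.sum_Ico_eq_sub _ hle]
    rw [div_eq_mul_inv, Finset.sum_mul]
    apply Finset.sum_le_sum
    intro i hi
    simp only [Finset.mem_Ico] at hi
    have hi1 : (i : ℝ) + 1 ≤ (2 ^ (k + 1) : ℕ) := by
      exact_mod_cast Nat.succ_le_of_lt hi.2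
    have hpos : (0 : ℝ) < (i : ℝ) + 1 := by positivity
    have : ((2 ^ (k + 1) : ℕ) : ℝ)⁻¹ ≤ ((i : ℝ) + 1)⁻¹ := inv_anti₀ hpos hi1
    calc z i * ((2 ^ (k + 1) : ℕ) : ℝ)⁻¹ ≤ z i * ((i : ℝ) + 1)⁻¹ :=
          mul_le_mul_of_nonneg_left this (hz0 i)
      _ = f i := by rw [hf]; ring
  have hle0 : m - m / 2 ≤ 0 :=
    le_of_tendsto_of_tendsto' hE hD hbound
  linarith

/-- **Besov priors: necessity of `t < s - d/q`.**  In the Besov setting, with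
`γ j = j^{-(s/d + 1/2 - 1/q)} δ^{-1/q}` and `(ξ j)` i.i.d. with density proportional to
`exp(-|x|^q/2)`, if `‖u‖_{X^{t,q}}^q = ∑_j j^{tq/d + q/2 - 1} |γ j ξ j|^q
= ∑_j δ⁻¹ j^{-(s-t)q/d} |ξ j|^q` is finite almost surely, then `t < s - d/q`. -/
theorem besov_prior_finite_norm_implies_regularity
    (d : ℕ) (hd : 0 < d) (q s δ t : ℝ) (hq : 1 ≤ q) (hs : 0 < s) (hδ : 0 < δ)
    (c : ℝ) (hc : c = (∫ x : ℝ, Real.exp (-|x| ^ q / 2))⁻¹)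
    (Ω : Type*) [MeasurableSpace Ω] (P : Measure Ω) [IsProbabilityMeasure P]
    (ξ : ℕ → Ω → ℝ) (hξm : ∀ j, Measurable (ξ j))
    (hξindep : iIndepFun ξ P)
    (hξlaw : ∀ j, Measure.map (ξ j) P
      = volume.withDensity fun x => ENNReal.ofReal (c * Real.exp (-|x| ^ q / 2)))
    (γ : ℕ → ℝ) (hγ : ∀ j : ℕ, γ (j + 1) = (j + 1 : ℝ) ^ (-(s / d + 1 / 2 - 1 / q)) * δ ^ (-(1 / q)))
    (hfin : ∀ᵐ ω ∂P, Summable fun j : ℕ =>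
      ((j + 1 : ℝ) ^ (t * q / d + q / 2 - 1)) * |γ (j + 1) * ξ (j + 1) ω| ^ q) :
    t < s - d / q := by
  by_contra hcon
  push_neg at hcon
  have hq0 : (0 : ℝ) < q := lt_of_lt_of_le one_pos hq
  have hd0 : (0 : ℝ) < d := by exact_mod_cast hd
  -- the exponent bound
  have hexp : (-1 : ℝ) ≤ (t - s) * q / d := by
    have h1 : (s - d / q) * q ≤ t * q := mul_le_mul_of_nonneg_right hcon hq0.le
    have h2 : (d : ℝ) / q * q = d := div_mul_cancel₀ _ hq0.ne'
    rw [le_div_iff₀ hd0]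
    nlinarith [h1, h2]
  -- truncated variables
  set g : ℝ → ℝ := fun x => min (|x| ^ q) 1 with hg
  have hgm : Measurable g := by fun_prop
  set Z : ℕ → Ω → ℝ := fun i ω => g (ξ (i + 1) ω) with hZ
  have hZm : ∀ i, Measurable (Z i) := fun i => hgm.comp (hξm (i + 1))
  have hZ0 : ∀ i ω, 0 ≤ Z i ω := fun i ω =>
    le_min (Real.rpow_nonneg (abs_nonneg _) q) zero_le_one
  have hZ1 : ∀ i ω, Z i ω ≤ 1 := fun i ω => min_le_right _ _
  have hint : Integrable (Z 0) P := by
    refine (integrable_const (1 : ℝ)).mono' (hZm 0).aestronglyMeasurable ?_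
    filter_upwards with ω
    rw [Real.norm_eq_abs, abs_of_nonneg (hZ0 0 ω)]
    exact hZ1 0 ω
  have hindep : Pairwise (Function.onFun (IndepFun · · P) Z) := by
    intro i j hij
    exact (hξindep.indepFun (by omega : i + 1 ≠ j + 1)).comp hgm hgm
  have hident : ∀ i, IdentDistrib (Z i) (Z 0) P P := by
    intro i
    have h1 : IdentDistrib (ξ (i + 1)) (ξ 1) P P :=
      ⟨(hξm _).aemeasurable, (hξm _).aemeasurable, by rw [hξlaw, hξlaw]⟩
    exact h1.comp hgm
  -- P(ξ 1 = 0) = 0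
  have hnull : P {ω | ξ 1 ω = 0} = 0 := by
    have : P {ω | ξ 1 ω = 0} = (Measure.map (ξ 1) P) {0} := by
      rw [Measure.map_apply (hξm 1) (measurableSet_singleton 0)]
      rfl
    rw [this, hξlaw 1, withDensity_apply _ (measurableSet_singleton 0),
      Measure.restrict_eq_zero.2 (measure_singleton 0), lintegral_zero_measure]
  -- positivity of the mean
  have hm : 0 < ∫ ω, Z 0 ω ∂P := by
    rw [integral_pos_iff_support_of_nonneg (fun ω => hZ0 0 ω) hint]
    have hsupp : Function.support (Z 0) = {ω | ξ 1 ω = 0}ᶜ := by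
      ext ω
      simp only [Function.mem_support, Set.mem_compl_iff, Set.mem_setOf_eq]
      constructor
      · intro h h0
        apply h
        simp [hZ, hg, h0, Real.zero_rpow hq0.ne']
      · intro h
        have : 0 < |ξ 1 ω| ^ q := Real.rpow_pos_of_pos (abs_pos.2 h) q
        have : 0 < Z 0 ω := lt_min this one_pos
        exact this.ne'
    rw [hsupp]
    have : P ({ω | ξ 1 ω = 0}ᶜ) = 1 := by
      rw [← measure_univ (μ := P)]
      apply measure_congr
      rw [ae_eq_univ, compl_compl]
      exact hnull
    rw [this]
    norm_num
  -- strong law of large numbers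
  have hslln := strong_law_ae_real Z hint hindep hident
  -- combine
  obtain ⟨ω, hsumω, hlimω⟩ := (hfin.and hslln).exists
  refine besov_aux_det (fun j => Z j ω) (fun j => hZ0 j ω) _ hm hlimω ?_
  -- comparison
  have hTsum : Summable (fun j : ℕ =>
      δ * (((j + 1 : ℝ) ^ (t * q / d + q / 2 - 1)) * |γ (j + 1) * ξ (j + 1) ω| ^ q)) :=
    hsumω.mul_left δ
  refine Summable.of_nonneg_of_le (fun j => by positivity) (fun j => ?_) hTsum
  -- key pointwise bound
  set n : ℝ := (j : ℝ) + 1 with hn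
  have hn0 : (0 : ℝ) < n := by positivity
  have hn1 : (1 : ℝ) ≤ n := by simp [hn]
  have hγpos : 0 < γ (j + 1) := by
    rw [hγ]
    positivity
  have hδinv : δ * δ⁻¹ = 1 := mul_inv_cancel₀ hδ.ne'
  have hnn : n ^ (t * q / ↑d + q / 2 - 1) * n ^ (-(s / ↑d + 1 / 2 - 1 / q) * q)
      = n ^ ((t - s) * q / ↑d) := by
    rw [← Real.rpow_add hn0]
    congr 1
    field_simp
    ring
  have hrw : δ * (n ^ (t * q / ↑d + q / 2 - 1) * |γ (j + 1) * ξ (j + 1) ω| ^ q)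
      = n ^ ((t - s) * q / ↑d) * |ξ (j + 1) ω| ^ q := by
    rw [abs_mul, Real.mul_rpow (abs_nonneg _) (abs_nonneg _), abs_of_pos hγpos, hγ,
      Real.mul_rpow (Real.rpow_nonneg hn0.le _) (Real.rpow_nonneg hδ.le _),
      ← Real.rpow_mul hn0.le, ← Real.rpow_mul hδ.le,
      show -(1 / q) * q = -1 by field_simp, Real.rpow_neg_one]
    linear_combination (|ξ (j + 1) ω| ^ q * δ * δ⁻¹) * hnn
      + (n ^ ((t - s) * q / ↑d) * |ξ (j + 1) ω| ^ q) * hδinv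
  rw [hrw]
  have h1 : n⁻¹ ≤ n ^ ((t - s) * q / ↑d) := by
    rw [← Real.rpow_neg_one n]
    exact Real.rpow_le_rpow_of_exponent_le hn1 hexp
  have h2 : Z j ω ≤ |ξ (j + 1) ω| ^ q := min_le_left _ _
  calc n⁻¹ * Z j ω ≤ n⁻¹ * |ξ (j + 1) ω| ^ q :=
        mul_le_mul_of_nonneg_left h2 (by positivity)
    _ ≤ n ^ ((t - s) * q / ↑d) * |ξ (j + 1) ω| ^ q :=
        mul_le_mul_of_nonneg_right h1 (Real.rpow_nonneg (abs_nonneg _) q)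
end

section
/- Let μ₀ be a probability measure on X, Q₀ on Y, ν₀ = μ₀ ⊗ Q₀, and Φ: X × Y → ℝ be ν₀-measurable with Z(y) := ∫_X exp(−Φ(u;y)) μ₀(du) > 0 for Q₀-a.e. y. Define ν(du,dy) by dν/dν₀ = exp(−Φ(u;y)). Then the conditional distribution μʸ of u given y under ν exists, satisfies μʸ ≪ μ₀, and dμʸ/dμ₀(u) = Z(y)^{−1} exp(−Φ(u;y)) for ν-a.e. y. -/
open MeasureTheory ProbabilityTheory ENNReal

set_option maxHeartbeats 1000000 in
/-- **Bayes' Theorem for inverse problems on function space.**  Let `μ₀` be a (prior)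
probability measure on `X`, `Q₀` a (noise) probability measure on `Y`, `ν₀ = μ₀ ⊗ Q₀`
the independent product, and let `Φ : X × Y → ℝ` be `ν₀`-measurable with
`Z(y) = ∫_X exp(-Φ(u;y)) μ₀(du) > 0` for `Q₀`-a.e. `y`.  Let `ν` be the probability
measure with `dν/dν₀ = exp(-Φ)`.  Then the conditional distribution `μʸ` of `u` given `y`
under `ν` exists (a Markov kernel disintegrating `ν` over its second marginal), satisfies
`μʸ ≪ μ₀`, and `dμʸ/dμ₀(u) = Z(y)⁻¹ exp(-Φ(u;y))` for a.e. `y`. -/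
theorem bayes_theorem_function_space
    (X Y : Type*) [MeasurableSpace X] [MeasurableSpace Y]
    (μ₀ : Measure X) [IsProbabilityMeasure μ₀]
    (Q₀ : Measure Y) [IsProbabilityMeasure Q₀]
    (Φ : X × Y → ℝ) (hΦm : Measurable Φ)
    (Z : Y → ℝ) (hZ : Z = fun y => ∫ u, Real.exp (-Φ (u, y)) ∂μ₀)
    (hZpos : ∀ᵐ y ∂Q₀, 0 < Z y)
    (ν : Measure (X × Y)) [IsProbabilityMeasure ν]
    (hν : ν = (μ₀.prod Q₀).withDensity fun p => ENNReal.ofReal (Real.exp (-Φ p))) :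
    ∃ μy : Kernel Y X, IsMarkovKernel μy ∧
      (∀ s : Set (X × Y), MeasurableSet s →
        ν s = ∫⁻ y, μy y {u | (u, y) ∈ s} ∂(ν.map Prod.snd)) ∧
      (∀ᵐ y ∂(ν.map Prod.snd),
        μy y = μ₀.withDensity fun u => ENNReal.ofReal (Real.exp (-Φ (u, y)) / Z y)) := by
  classical
  -- notation
  set g : X × Y → ℝ≥0∞ := fun p => ENNReal.ofReal (Real.exp (-Φ p)) with hgdef
  have hgm : Measurable g := by
    rw [hgdef]; exact (Real.measurable_exp.comp hΦm.neg).ennreal_ofReal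
  clear_value g
  have hZm : Measurable Z := by
    rw [hZ]
    exact (Real.measurable_exp.comp hΦm.neg).stronglyMeasurable.integral_prod_left'.measurable
  -- the candidate density
  set f : Y → X → ℝ≥0∞ := fun y u => ENNReal.ofReal (Real.exp (-Φ (u, y)) / Z y) with hfdef
  have hfm : Measurable (Function.uncurry f) := by
    apply Measurable.ennreal_ofReal
    exact ((Real.measurable_exp.comp ((hΦm.comp measurable_swap).neg)).div
      (hZm.comp measurable_fst))
  clear_value f
  -- measurability of the normalizing lintegral
  have hlm : Measurable fun y => ∫⁻ u, f y u ∂μ₀ := by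
    exact Measurable.lintegral_prod_left' (f := fun p : X × Y => f p.2 p.1)
      (hfm.comp measurable_swap)
  -- the good set
  set G : Set Y := (fun y => ∫⁻ u, f y u ∂μ₀) ⁻¹' {1} with hGdef
  have hGm : MeasurableSet G := hlm (measurableSet_singleton 1)
  -- patched density
  set F : Y → X → ℝ≥0∞ := fun y u => if y ∈ G then f y u else 1 with hFdef
  have hFm : Measurable (Function.uncurry F) := by
    have : Function.uncurry F = fun p : Y × X =>
        if p.1 ∈ G then Function.uncurry f p else 1 := by
      ext p; rfl
    rw [this]
    exact Measurable.ite (measurable_fst hGm) hfm measurable_const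
  -- the kernel
  set κ : Kernel Y X := Kernel.withDensity (Kernel.const Y μ₀) F with hκdef
  have hκapp : ∀ y, κ y = μ₀.withDensity (F y) := by
    intro y
    rw [hκdef, Kernel.withDensity_apply _ hFm, Kernel.const_apply]
  -- a.e. integrability and positivity
  have hInt : ∀ᵐ y ∂Q₀, Integrable (fun u => Real.exp (-Φ (u, y))) μ₀ ∧ 0 < Z y := by
    filter_upwards [hZpos] with y hy
    refine ⟨?_, hy⟩
    by_contra h
    have hy' := hy
    rw [hZ] at hy'
    simp only at hy'
    rw [integral_undef h] at hy'
    exact lt_irrefl 0 hy'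
  -- a.e. value of the fiberwise lintegral of g
  have hW : ∀ᵐ y ∂Q₀, ∫⁻ u, g (u, y) ∂μ₀ = ENNReal.ofReal (Z y) := by
    filter_upwards [hInt] with y hy
    rw [hgdef, hZ]
    exact (ofReal_integral_eq_lintegral_ofReal hy.1
      (Filter.Eventually.of_forall fun u => (Real.exp_pos _).le)).symm
  -- a.e. y is in the good set
  have hG : ∀ᵐ y ∂Q₀, y ∈ G := by
    filter_upwards [hInt, hW] with y hy hw
    have hZy : 0 < Z y := hy.2
    have hne : ENNReal.ofReal (Z y) ≠ 0 := (ENNReal.ofReal_pos.2 hZy).ne'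
    show ∫⁻ u, f y u ∂μ₀ = 1
    calc ∫⁻ u, f y u ∂μ₀
        = ∫⁻ u, g (u, y) * (ENNReal.ofReal (Z y))⁻¹ ∂μ₀ := by
          apply lintegral_congr
          intro u
          rw [hfdef, hgdef]
          simp only
          rw [ENNReal.ofReal_div_of_pos hZy, div_eq_mul_inv]
      _ = (∫⁻ u, g (u, y) ∂μ₀) * (ENNReal.ofReal (Z y))⁻¹ :=
          lintegral_mul_const' _ _ (by simp [hne])
      _ = ENNReal.ofReal (Z y) * (ENNReal.ofReal (Z y))⁻¹ := by rw [hw]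
      _ = 1 := ENNReal.mul_inv_cancel hne ENNReal.ofReal_ne_top
  -- Markov kernel
  have hMarkov : IsMarkovKernel κ := by
    refine ⟨fun y => ⟨?_⟩⟩
    rw [hκapp y, withDensity_apply _ MeasurableSet.univ, Measure.restrict_univ]
    by_cases hy : y ∈ G
    · have : F y = f y := by funext u; simp [hFdef, hy]
      rw [this]
      exact hy
    · have : F y = fun _ => 1 := by funext u; simp [hFdef, hy]
      rw [this, lintegral_one, measure_univ]
  -- marginal of ν on Y
  have hmap : ν.map Prod.snd = Q₀.withDensity (fun y => ∫⁻ u, g (u, y) ∂μ₀) := by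
    ext A hA
    rw [Measure.map_apply measurable_snd hA, hν, withDensity_apply _ (measurable_snd hA),
      withDensity_apply _ hA, ← lintegral_indicator (measurable_snd hA),
      lintegral_prod_symm' _ (hgm.indicator (measurable_snd hA)),
      ← lintegral_indicator hA]
    congr 1
    funext y
    by_cases hy : y ∈ A
    · simp only [Set.indicator_of_mem hy]
      apply lintegral_congr
      intro u
      simp [Set.indicator, hy]
    · simp only [Set.indicator_of_notMem hy]
      rw [← lintegral_zero (μ := μ₀)]
      apply lintegral_congr
      intro u
      simp [Set.indicator, hy]
  have hWm : Measurable fun y => ∫⁻ u, g (u, y) ∂μ₀ := hgm.lintegral_prod_left'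
  have hmapac : ν.map Prod.snd ≪ Q₀ := by
    rw [hmap]; exact withDensity_absolutelyContinuous _ _
  refine ⟨κ, hMarkov, ?_, ?_⟩
  · -- disintegration
    intro s hs
    have hsy : ∀ y : Y, MeasurableSet {u | (u, y) ∈ s} := fun y =>
      measurable_prodMk_right hs
    have hκs : Measurable fun y => κ y {u | (u, y) ∈ s} := by
      have h1 : ∀ y : Y, {u | (u, y) ∈ s} = Prod.mk y ⁻¹' (Prod.swap ⁻¹' s) := by
        intro y; rfl
      simp_rw [h1]
      exact Kernel.measurable_kernel_prodMk_left (measurable_swap hs)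
    rw [hmap, lintegral_withDensity_eq_lintegral_mul _ hWm hκs]
    -- LHS as an iterated integral
    rw [hν, withDensity_apply _ hs, ← lintegral_indicator hs,
      lintegral_prod_symm' _ (hgm.indicator hs)]
    apply lintegral_congr_ae
    filter_upwards [hG, hW, hInt] with y hyG hyW hyI
    have hZy : 0 < Z y := hyI.2
    have hne : ENNReal.ofReal (Z y) ≠ 0 := (ENNReal.ofReal_pos.2 hZy).ne'
    have hFy : F y = f y := by funext u; simp [hFdef, hyG]
    have h2 : κ y {u | (u, y) ∈ s} = ∫⁻ u in {u | (u, y) ∈ s}, f y u ∂μ₀ := by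
      rw [hκapp y, withDensity_apply _ (hsy y), hFy]
    calc ∫⁻ u, s.indicator g (u, y) ∂μ₀
        = ∫⁻ u in {u | (u, y) ∈ s}, g (u, y) ∂μ₀ := by
          rw [← lintegral_indicator (hsy y)]
          apply lintegral_congr
          intro u
          by_cases hu : (u, y) ∈ s <;> simp [Set.indicator, hu]
      _ = ∫⁻ u in {u | (u, y) ∈ s}, ENNReal.ofReal (Z y) * f y u ∂μ₀ := by
          apply lintegral_congr
          intro u
          rw [hfdef, hgdef]
          simp only
          rw [ENNReal.ofReal_div_of_pos hZy, ENNReal.mul_div_cancel hne ENNReal.ofReal_ne_top]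
      _ = ENNReal.ofReal (Z y) * ∫⁻ u in {u | (u, y) ∈ s}, f y u ∂μ₀ :=
          lintegral_const_mul' _ _ ENNReal.ofReal_ne_top
      _ = ((fun y => ∫⁻ u, g (u, y) ∂μ₀) * fun y => κ y {u | (u, y) ∈ s}) y := by
          rw [Pi.mul_apply, hyW, h2]
  · -- a.e. identification of the kernel
    have : ∀ᵐ y ∂Q₀,
        κ y = μ₀.withDensity fun u => ENNReal.ofReal (Real.exp (-Φ (u, y)) / Z y) := by
      filter_upwards [hG] with y hyG
      have hFy : F y = f y := by funext u; simp [hFdef, hyG]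
      rw [hκapp y, hFy, hfdef]
    exact this.filter_mono hmapac.ae_le
end

section
/- Under Assumptions 4.1 (Φ continuous, Φ(u;y) ≥ −M₁(r,‖u‖), |Φ(u;y₁) − Φ(u;y₂)| ≤ M₂(r,‖u‖)‖y₁−y₂‖ for y, y₁, y₂ ∈ B_Y(0,r)), μ₀(X′) = 1, μ₀(X′ ∩ B) > 0 for some bounded B, and exp(M₁(r,‖u‖)) M₂(r,‖u‖)² ∈ L¹_{μ₀}, there exists C = C(r) such that the posteriors satisfy d_Hell(μʸ, μ^{y′}) ≤ C ‖y − y′‖_Y for all y, y′ ∈ B_Y(0,r). -/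
open MeasureTheory

/-- The Hellinger distance between two measures, computed with respect to the common
dominating reference measure `μ + μ'`:
`d_Hell(μ, μ')² = (1/2) ∫ (√(dμ/dν) − √(dμ'/dν))² dν`, `ν = μ + μ'`. -/
noncomputable def hellingerDist {X : Type*} [MeasurableSpace X] (μ μ' : Measure X) : ℝ :=
  Real.sqrt ((1 / 2) * ∫ u,
    (Real.sqrt ((μ.rnDeriv (μ + μ') u).toReal)
      - Real.sqrt ((μ'.rnDeriv (μ + μ') u).toReal)) ^ 2 ∂(μ + μ'))

open scoped ENNReal NNReal

private lemma exp_diff_le_aux (c M s t : ℝ) (hc : 0 ≤ c) (hs : -M ≤ s) (ht : -M ≤ t) :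
    |Real.exp (-(c*s)) - Real.exp (-(c*t))| ≤ c * Real.exp (c*M) * |s - t| := by
  wlog h : s ≤ t generalizing s t
  · rw [abs_sub_comm, abs_sub_comm s t]; exact this t s ht hs (le_of_not_ge h)
  have h1 : Real.exp (-(c*t)) ≤ Real.exp (-(c*s)) := Real.exp_le_exp.2 (by nlinarith)
  have h2 : Real.exp (-(c*s)) ≤ Real.exp (c*M) := Real.exp_le_exp.2 (by nlinarith)
  have h3 : Real.exp (-(c*t)) = Real.exp (-(c*s)) * Real.exp (-(c*(t-s))) := by
    rw [← Real.exp_add]; ring_nf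
  have h4 : 1 - Real.exp (-(c*(t-s))) ≤ c*(t-s) := by
    have := Real.add_one_le_exp (-(c*(t-s))); linarith
  have h5 : Real.exp (-(c*(t-s))) ≤ 1 := Real.exp_le_one_iff.2 (by nlinarith)
  rw [abs_of_nonneg (by linarith), abs_of_nonpos (by linarith), neg_sub]
  calc Real.exp (-(c*s)) - Real.exp (-(c*t))
      = Real.exp (-(c*s)) * (1 - Real.exp (-(c*(t-s)))) := by rw [h3]; ring
    _ ≤ Real.exp (c*M) * (c*(t-s)) := by
        apply mul_le_mul h2 h4 (by linarith) (Real.exp_pos _).le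
    _ = c * Real.exp (c*M) * (t - s) := by ring

set_option maxHeartbeats 1000000 in
private lemma key_pointwise (a b M W d Zy Zy' Zm : ℝ)
    (hZm : 0 < Zm) (hZy : Zm ≤ Zy) (hZy' : Zm ≤ Zy')
    (ha : -M ≤ a) (hb : -M ≤ b) (hd : 0 ≤ d) (hW : 0 ≤ W)
    (hab : |a - b| ≤ W * d) :
    (Real.sqrt (Real.exp (-a) / Zy) - Real.sqrt (Real.exp (-b) / Zy'))^2
      ≤ (Real.exp M * W^2 * d^2) / (2*Zm)
        + Real.exp (-b) * ((Zy - Zy')^2 / (2*Zm^3)) := by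
  have hZy0 : (0:ℝ) < Zy := lt_of_lt_of_le hZm hZy
  have hZy'0 : (0:ℝ) < Zy' := lt_of_lt_of_le hZm hZy'
  rw [Real.sqrt_div (Real.exp_pos _).le, Real.sqrt_div (Real.exp_pos _).le]
  set p := Real.sqrt (Real.exp (-a)) with hp
  set q := Real.sqrt (Real.exp (-b)) with hq
  set sy := Real.sqrt Zy with hsy
  set sy' := Real.sqrt Zy' with hsy'
  set sm := Real.sqrt Zm with hsm
  have hsy2 : sy^2 = Zy := Real.sq_sqrt hZy0.le
  have hsy'2 : sy'^2 = Zy' := Real.sq_sqrt hZy'0.le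
  have hsm2 : sm^2 = Zm := Real.sq_sqrt hZm.le
  have hsy0 : 0 < sy := Real.sqrt_pos.2 hZy0
  have hsy'0 : 0 < sy' := Real.sqrt_pos.2 hZy'0
  have hsm0 : 0 < sm := Real.sqrt_pos.2 hZm
  have hsmy : sm ≤ sy := Real.sqrt_le_sqrt hZy
  have hsmy' : sm ≤ sy' := Real.sqrt_le_sqrt hZy'
  have hq2 : q^2 = Real.exp (-b) := Real.sq_sqrt (Real.exp_pos _).le
  have hqpos : 0 < q := Real.sqrt_pos.2 (Real.exp_pos _)
  -- p, q as exponentials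
  have hpe : p = Real.exp (-((1/2:ℝ)*a)) := by
    rw [hp, ← Real.exp_half]; ring_nf
  have hqe : q = Real.exp (-((1/2:ℝ)*b)) := by
    rw [hq, ← Real.exp_half]; ring_nf
  -- bound on |p - q|
  have hpq : |p - q| ≤ (1/2) * Real.exp ((1/2)*M) * (W*d) := by
    rw [hpe, hqe]
    calc |Real.exp (-((1/2:ℝ)*a)) - Real.exp (-((1/2:ℝ)*b))|
        ≤ (1/2) * Real.exp ((1/2)*M) * |a - b| :=
          exp_diff_le_aux (1/2) M a b (by norm_num) ha hb
      _ ≤ (1/2) * Real.exp ((1/2)*M) * (W*d) := by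
          apply mul_le_mul_of_nonneg_left hab
          positivity
  have hexpM : Real.exp ((1/2)*M) ^ 2 = Real.exp M := by
    rw [sq, ← Real.exp_add]; ring_nf
  -- decomposition
  have hdecomp : p/sy - q/sy' = (p - q)/sy + q * (1/sy - 1/sy') := by
    field_simp
    ring
  rw [hdecomp]
  have hsq : ∀ x y : ℝ, (x + y)^2 ≤ 2*x^2 + 2*y^2 := by intro x y; nlinarith [sq_nonneg (x-y)]
  refine le_trans (hsq _ _) ?_
  -- first term
  have hx2 : ((p - q)/sy)^2 ≤ (Real.exp M * W^2 * d^2) / (2*Zm) / 2 := by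
    rw [div_pow, hsy2]
    have h1 : (p - q)^2 ≤ Real.exp M * W^2 * d^2 / 4 := by
      have habs := abs_le.mp hpq
      have h0 : (p - q)^2 ≤ ((1/2) * Real.exp ((1/2)*M) * (W*d))^2 :=
        sq_le_sq' (by linarith [habs.1]) habs.2
      calc (p - q)^2 ≤ ((1/2) * Real.exp ((1/2)*M) * (W*d))^2 := h0
        _ = Real.exp ((1/2)*M)^2 * W^2 * d^2 / 4 := by ring
        _ = Real.exp M * W^2 * d^2 / 4 := by rw [hexpM]
    calc (p-q)^2 / Zy ≤ (Real.exp M * W^2 * d^2 / 4) / Zm :=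
          div_le_div₀ (by positivity) h1 hZm hZy
      _ = (Real.exp M * W^2 * d^2) / (2*Zm) / 2 := by ring
  -- second term
  have hy2 : (q * (1/sy - 1/sy'))^2 ≤ Real.exp (-b) * ((Zy - Zy')^2 / (2*Zm^3)) / 2 := by
    have hdiff : (1/sy - 1/sy')^2 ≤ (Zy - Zy')^2 / (4*Zm^3) := by
      have h1 : 1/sy - 1/sy' = (sy' - sy) / (sy * sy') := by field_simp
      have h2 : (sy' - sy)^2 * (sy' + sy)^2 = (Zy - Zy')^2 := by
        have h2a : (sy' - sy) * (sy' + sy) = Zy' - Zy := by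
          have h := hsy2; have h' := hsy'2
          linear_combination h' - h
        calc (sy' - sy)^2 * (sy' + sy)^2 = ((sy' - sy) * (sy' + sy))^2 := by ring
          _ = (Zy' - Zy)^2 := by rw [h2a]
          _ = (Zy - Zy')^2 := by ring
      have h3 : (4:ℝ)*Zm ≤ (sy' + sy)^2 := by
        have e1 : (2*sm)^2 = 4*Zm := by rw [mul_pow, hsm2]; norm_num
        have e2 : (2*sm)^2 ≤ (sy' + sy)^2 :=
          pow_le_pow_left₀ (by positivity) (by linarith) 2
        linarith
      have h4 : Zm^2 ≤ (sy * sy')^2 := by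
        have hmm : sm * sm ≤ sy * sy' :=
          mul_le_mul hsmy hsmy' hsm0.le hsy0.le
        have e1 : (sm*sm)^2 = Zm^2 := by rw [← hsm2]; ring
        have e2 : (sm*sm)^2 ≤ (sy*sy')^2 :=
          pow_le_pow_left₀ (by positivity) hmm 2
        linarith
      rw [h1, div_pow]
      rw [div_le_div_iff₀ (by positivity) (by positivity)]
      calc (sy' - sy)^2 * (4*Zm^3) = ((sy'-sy)^2 * (4*Zm)) * Zm^2 := by ring
        _ ≤ ((sy'-sy)^2 * (sy'+sy)^2) * (sy*sy')^2 := by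
            apply mul_le_mul (mul_le_mul_of_nonneg_left h3 (by positivity)) h4 (by positivity)
            positivity
        _ = (Zy - Zy')^2 * (sy*sy')^2 := by rw [h2]
    calc (q * (1/sy - 1/sy'))^2 = Real.exp (-b) * (1/sy - 1/sy')^2 := by
          rw [mul_pow, hq2]
      _ ≤ Real.exp (-b) * ((Zy - Zy')^2 / (4*Zm^3)) := by
          apply mul_le_mul_of_nonneg_left hdiff (Real.exp_pos _).le
      _ = Real.exp (-b) * ((Zy - Zy')^2 / (2*Zm^3)) / 2 := by ring
  linarith [hx2, hy2]

private lemma hellingerDist_withDensity {X : Type*} [MeasurableSpace X] (μ₀ : Measure X)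
    (f g : X → ℝ) (hf : Measurable f) (hg : Measurable g)
    (hfpos : ∀ u, 0 < f u) (hgpos : ∀ u, 0 < g u)
    (hfi : Integrable f μ₀) (hgi : Integrable g μ₀) :
    hellingerDist (μ₀.withDensity fun u => ENNReal.ofReal (f u))
        (μ₀.withDensity fun u => ENNReal.ofReal (g u))
      = Real.sqrt ((1/2) * ∫ u, (Real.sqrt (f u) - Real.sqrt (g u))^2 ∂μ₀) := by
  set F : X → ℝ≥0∞ := fun u => ENNReal.ofReal (f u) with hF
  set G : X → ℝ≥0∞ := fun u => ENNReal.ofReal (g u) with hG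
  have hFm : Measurable F := hf.ennreal_ofReal
  have hGm : Measurable G := hg.ennreal_ofReal
  have hFtop : ∀ u, F u ≠ ⊤ := fun u => ENNReal.ofReal_ne_top
  have hGtop : ∀ u, G u ≠ ⊤ := fun u => ENNReal.ofReal_ne_top
  have hFG0 : ∀ u, F u + G u ≠ 0 := by
    intro u
    simp only [hF, hG, ne_eq, add_eq_zero, ENNReal.ofReal_eq_zero, not_and, not_le]
    intro _; exact hgpos u
  have hFGtop : ∀ u, F u + G u ≠ ⊤ := fun u =>
    ENNReal.add_ne_top.2 ⟨hFtop u, hGtop u⟩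
  set S : X → ℝ≥0∞ := fun u => F u + G u with hS
  have hSm : Measurable S := hFm.add hGm
  have hSeq : F + G = S := rfl
  have hsum : μ₀.withDensity F + μ₀.withDensity G = μ₀.withDensity S := by
    rw [← hSeq]; exact (withDensity_add_left hFm G).symm
  set ν := μ₀.withDensity S with hν
  have hνfin : IsFiniteMeasure ν := by
    constructor
    rw [hν, withDensity_apply _ MeasurableSet.univ, Measure.restrict_univ]
    calc ∫⁻ u, S u ∂μ₀ = ∫⁻ u, F u ∂μ₀ + ∫⁻ u, G u ∂μ₀ := lintegral_add_left hFm _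
      _ < ⊤ := ENNReal.add_lt_top.2 ⟨hfi.lintegral_lt_top, hgi.lintegral_lt_top⟩
  have key : ∀ (H : X → ℝ≥0∞), Measurable H → (∀ u, H u ≠ ⊤) →
      ν.withDensity (fun u => H u / S u) = μ₀.withDensity H := by
    intro H hHm _
    show ν.withDensity (H / S) = μ₀.withDensity H
    rw [hν, ← withDensity_mul _ hSm (hHm.div hSm)]
    congr 1
    funext u
    exact ENNReal.mul_div_cancel (hFG0 u) (hFGtop u)
  have hrnF : (fun u => F u / S u) =ᵐ[ν] (μ₀.withDensity F).rnDeriv ν :=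
    Measure.eq_rnDeriv (μ := μ₀.withDensity F)
      (hFm.div hSm) Measure.MutuallySingular.zero_left
      (by rw [zero_add, key F hFm hFtop])
  have hrnG : (fun u => G u / S u) =ᵐ[ν] (μ₀.withDensity G).rnDeriv ν :=
    Measure.eq_rnDeriv (μ := μ₀.withDensity G)
      (hGm.div hSm) Measure.MutuallySingular.zero_left
      (by rw [zero_add, key G hGm hGtop])
  rw [hellingerDist, hsum]
  congr 1
  have step1 : ∫ u, (Real.sqrt (((μ₀.withDensity F).rnDeriv ν u).toReal)
        - Real.sqrt (((μ₀.withDensity G).rnDeriv ν u).toReal))^2 ∂ν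
      = ∫ u, (Real.sqrt ((F u / S u).toReal)
        - Real.sqrt ((G u / S u).toReal))^2 ∂ν := by
    apply integral_congr_ae
    filter_upwards [hrnF, hrnG] with u h1 h2
    rw [← h1, ← h2]
  rw [step1]
  have hFGcoe : S = fun u => ((Real.toNNReal (f u + g u) : ℝ≥0) : ℝ≥0∞) := by
    funext u
    simp only [hS, hF, hG]
    rw [← ENNReal.ofReal_add (hfpos u).le (hgpos u).le]
    rfl
  have step2 : ∫ u, (Real.sqrt ((F u / S u).toReal)
        - Real.sqrt ((G u / S u).toReal))^2 ∂ν
      = ∫ u, (Real.toNNReal (f u + g u) : ℝ) • (Real.sqrt ((F u / S u).toReal)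
        - Real.sqrt ((G u / S u).toReal))^2 ∂μ₀ := by
    rw [hν, hFGcoe]
    exact integral_withDensity_eq_integral_smul (hf.add hg).real_toNNReal _
  rw [step2]
  congr 1
  apply integral_congr_ae
  filter_upwards with u
  have hs : 0 < f u + g u := add_pos (hfpos u) (hgpos u)
  have hFG : S u = ENNReal.ofReal (f u + g u) := by
    simp only [hS, hF, hG]
    rw [← ENNReal.ofReal_add (hfpos u).le (hgpos u).le]
  have htor : ∀ (x : ℝ), 0 ≤ x →
      ((ENNReal.ofReal x) / S u).toReal = x / (f u + g u) := by
    intro x hx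
    rw [hFG, ENNReal.toReal_div, ENNReal.toReal_ofReal hx, ENNReal.toReal_ofReal hs.le]
  simp only [hF, hG]
  rw [htor _ (hfpos u).le, htor _ (hgpos u).le,
    Real.sqrt_div (hfpos u).le, Real.sqrt_div (hgpos u).le]
  rw [smul_eq_mul, Real.coe_toNNReal _ hs.le]
  rw [div_sub_div_same, div_pow, Real.sq_sqrt hs.le]
  rw [mul_div_cancel₀ _ (ne_of_gt hs)]

/-- **Well-posedness: Lipschitz continuity of the posterior in the data.**  Under
Assumptions 4.1 (`Φ` continuous on `X' × Y`, `Φ(u;y) ≥ -M₁(r,‖u‖)`, and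
`|Φ(u;y₁) − Φ(u;y₂)| ≤ M₂(r,‖u‖) ‖y₁ − y₂‖` for `y, y₁, y₂ ∈ B_Y(0,r)`, with `M₁, M₂`
monotone non-decreasing in each argument and `M₂ > 0`), if `μ₀(X') = 1`,
`μ₀(X' ∩ B) > 0` for some bounded `B`, and `exp(M₁(r,‖u‖)) M₂(r,‖u‖)² ∈ L¹_{μ₀}`, then
there is `C = C(r)` such that the posteriors `dμʸ/dμ₀ = Z(y)⁻¹ exp(−Φ(u;y))` satisfy
`d_Hell(μʸ, μ^{y'}) ≤ C ‖y − y'‖` for all `y, y'` in the ball of radius `r`. -/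
theorem posterior_lipschitz_in_data_hellinger
    (X Y : Type*) [NormedAddCommGroup X] [NormedSpace ℝ X] [CompleteSpace X]
    [MeasurableSpace X] [BorelSpace X]
    [NormedAddCommGroup Y] [NormedSpace ℝ Y] [CompleteSpace Y]
    (μ₀ : Measure X) [IsProbabilityMeasure μ₀]
    (X' : Set X) (hX' : μ₀ X' = 1)
    (B : Set X) (hBbdd : Bornology.IsBounded B) (hB : 0 < μ₀ (X' ∩ B))
    (Φ : X → Y → ℝ)
    (hΦm : ∀ y, Measurable fun u => Φ u y)
    (hΦc : ContinuousOn (fun p : X × Y => Φ p.1 p.2) (X' ×ˢ Set.univ))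
    (M₁ M₂ : ℝ → ℝ → ℝ)
    (hM₁mono : ∀ r r' a a', r ≤ r' → a ≤ a' → M₁ r a ≤ M₁ r' a')
    (hM₂mono : ∀ r r' a a', r ≤ r' → a ≤ a' → M₂ r a ≤ M₂ r' a')
    (hM₂pos : ∀ r a, 0 < M₂ r a)
    (hlb : ∀ u ∈ X', ∀ (r : ℝ) (y : Y), ‖y‖ ≤ r → -M₁ r ‖u‖ ≤ Φ u y)
    (hlip : ∀ u ∈ X', ∀ (r : ℝ) (y₁ y₂ : Y), ‖y₁‖ ≤ r → ‖y₂‖ ≤ r →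
      |Φ u y₁ - Φ u y₂| ≤ M₂ r ‖u‖ * ‖y₁ - y₂‖)
    (hint : ∀ r : ℝ, Integrable (fun u => Real.exp (M₁ r ‖u‖) * (M₂ r ‖u‖) ^ 2) μ₀)
    (Z : Y → ℝ) (hZ : Z = fun y => ∫ u, Real.exp (-Φ u y) ∂μ₀)
    (μpost : Y → Measure X)
    (hμpost : μpost = fun y =>
      μ₀.withDensity fun u => ENNReal.ofReal (Real.exp (-Φ u y) / Z y)) :
    ∀ r > (0 : ℝ), ∃ C > (0 : ℝ), ∀ y y' : Y, ‖y‖ ≤ r → ‖y'‖ ≤ r →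
      hellingerDist (μpost y) (μpost y') ≤ C * ‖y - y'‖ := by
  intro r hr
  -- measurability
  have hM₁meas : Measurable (fun u : X => M₁ r ‖u‖) :=
    (Monotone.measurable (fun a b hab => hM₁mono r r a b le_rfl hab)).comp measurable_norm
  have hM₂meas : Measurable (fun u : X => M₂ r ‖u‖) :=
    (Monotone.measurable (fun a b hab => hM₂mono r r a b le_rfl hab)).comp measurable_norm
  have hGmeas : Measurable (fun u : X => Real.exp (M₁ r ‖u‖)) :=
    Real.measurable_exp.comp hM₁meas
  have hEmeas : ∀ y : Y, Measurable (fun u => Real.exp (-Φ u y)) := fun y =>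
    Real.measurable_exp.comp (hΦm y).neg
  -- a.e. facts from X'
  have haeX : ∀ (A : Set X), MeasurableSet A → X' ⊆ A → ∀ᵐ u ∂μ₀, u ∈ A := by
    intro A hA hsub
    have h1 : μ₀ A = 1 := le_antisymm prob_le_one (hX' ▸ measure_mono hsub)
    rw [ae_iff]
    have h2 : {u | ¬ u ∈ A} = Aᶜ := rfl
    rw [h2, measure_compl hA (measure_ne_top μ₀ A), h1, measure_univ, tsub_self]
  have hae_lb : ∀ y : Y, ‖y‖ ≤ r → ∀ᵐ u ∂μ₀, -M₁ r ‖u‖ ≤ Φ u y := by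
    intro y hy
    exact haeX {u | -M₁ r ‖u‖ ≤ Φ u y} (measurableSet_le hM₁meas.neg (hΦm y))
      (fun u hu => hlb u hu r y hy)
  have hae_lip : ∀ y y' : Y, ‖y‖ ≤ r → ‖y'‖ ≤ r →
      ∀ᵐ u ∂μ₀, |Φ u y - Φ u y'| ≤ M₂ r ‖u‖ * ‖y - y'‖ := by
    intro y y' hy hy'
    exact haeX {u | |Φ u y - Φ u y'| ≤ M₂ r ‖u‖ * ‖y - y'‖}
      (measurableSet_le ((hΦm y).sub (hΦm y')).abs (hM₂meas.mul_const _))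
      (fun u hu => hlip u hu r y y' hy hy')
  -- integrability
  set m := M₂ r 0 with hm
  have hm0 : 0 < m := hM₂pos r 0
  have hM₂lb : ∀ u : X, m ≤ M₂ r ‖u‖ := fun u => hM₂mono r r 0 ‖u‖ le_rfl (norm_nonneg u)
  have hInt2 : Integrable (fun u => Real.exp (M₁ r ‖u‖) * (M₂ r ‖u‖)^2) μ₀ := hint r
  have hGint : Integrable (fun u : X => Real.exp (M₁ r ‖u‖)) μ₀ := by
    refine Integrable.mono' (hInt2.const_mul ((m^2)⁻¹)) hGmeas.aestronglyMeasurable ?_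
    filter_upwards with u
    rw [Real.norm_eq_abs, abs_of_nonneg (Real.exp_pos _).le]
    have h1 : m^2 ≤ (M₂ r ‖u‖)^2 := pow_le_pow_left₀ hm0.le (hM₂lb u) 2
    have h2 : Real.exp (M₁ r ‖u‖) * m^2 ≤ Real.exp (M₁ r ‖u‖) * (M₂ r ‖u‖)^2 :=
      mul_le_mul_of_nonneg_left h1 (Real.exp_pos _).le
    calc Real.exp (M₁ r ‖u‖) = (m^2)⁻¹ * (Real.exp (M₁ r ‖u‖) * m^2) := by
          field_simp
      _ ≤ (m^2)⁻¹ * (Real.exp (M₁ r ‖u‖) * (M₂ r ‖u‖)^2) := by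
          apply mul_le_mul_of_nonneg_left h2 (by positivity)
  have hGM₂int : Integrable (fun u : X => Real.exp (M₁ r ‖u‖) * M₂ r ‖u‖) μ₀ := by
    refine Integrable.mono' (hInt2.const_mul (m⁻¹)) (hGmeas.mul hM₂meas).aestronglyMeasurable ?_
    filter_upwards with u
    have hMu := hM₂lb u
    rw [Real.norm_eq_abs, abs_of_nonneg (mul_nonneg (Real.exp_pos _).le (hM₂pos r _).le)]
    have h2 : (Real.exp (M₁ r ‖u‖) * M₂ r ‖u‖) * m ≤ Real.exp (M₁ r ‖u‖) * (M₂ r ‖u‖)^2 := by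
      have : (Real.exp (M₁ r ‖u‖) * M₂ r ‖u‖) * m ≤ (Real.exp (M₁ r ‖u‖) * M₂ r ‖u‖) * M₂ r ‖u‖ :=
        mul_le_mul_of_nonneg_left hMu (mul_nonneg (Real.exp_pos _).le (hM₂pos r _).le)
      calc (Real.exp (M₁ r ‖u‖) * M₂ r ‖u‖) * m
          ≤ (Real.exp (M₁ r ‖u‖) * M₂ r ‖u‖) * M₂ r ‖u‖ := this
        _ = Real.exp (M₁ r ‖u‖) * (M₂ r ‖u‖)^2 := by ring
    calc Real.exp (M₁ r ‖u‖) * M₂ r ‖u‖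
        = m⁻¹ * ((Real.exp (M₁ r ‖u‖) * M₂ r ‖u‖) * m) := by field_simp
      _ ≤ m⁻¹ * (Real.exp (M₁ r ‖u‖) * (M₂ r ‖u‖)^2) := by
          apply mul_le_mul_of_nonneg_left h2 (by positivity)
  have hae_dom : ∀ y : Y, ‖y‖ ≤ r →
      ∀ᵐ u ∂μ₀, Real.exp (-Φ u y) ≤ Real.exp (M₁ r ‖u‖) := by
    intro y hy
    filter_upwards [hae_lb y hy] with u hu
    exact Real.exp_le_exp.2 (by linarith)
  have hEint : ∀ y : Y, ‖y‖ ≤ r → Integrable (fun u => Real.exp (-Φ u y)) μ₀ := by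
    intro y hy
    refine hGint.mono' (hEmeas y).aestronglyMeasurable ?_
    filter_upwards [hae_dom y hy] with u hu
    rwa [Real.norm_eq_abs, abs_of_nonneg (Real.exp_pos _).le]
  set K := ∫ u, Real.exp (M₁ r ‖u‖) ∂μ₀ with hK
  have hK0 : 0 ≤ K := integral_nonneg fun u => (Real.exp_pos _).le
  have hZle : ∀ y : Y, ‖y‖ ≤ r → Z y ≤ K := by
    intro y hy
    rw [hZ]
    exact integral_mono_ae (hEint y hy) hGint (hae_dom y hy)
  -- lower bound on Z
  have hr0 : ‖(0:Y)‖ ≤ r := by simpa using hr.le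
  obtain ⟨R, hRB⟩ : ∃ R, B ⊆ Metric.closedBall (0:X) R := hBbdd.subset_closedBall 0
  set T := toMeasurable μ₀ (X' ∩ B) ∩ Metric.closedBall (0:X) R with hT
  have hTmeas : MeasurableSet T :=
    (measurableSet_toMeasurable _ _).inter measurableSet_closedBall
  have hTsub : X' ∩ B ⊆ T :=
    Set.subset_inter (subset_toMeasurable _ _) (fun u hu => hRB hu.2)
  have hTpos : 0 < μ₀ T := lt_of_lt_of_le hB (measure_mono hTsub)
  have hTnorm : ∀ u ∈ T, ‖u‖ ≤ R := by
    intro u hu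
    have := hu.2
    rwa [Metric.mem_closedBall, dist_zero_right] at this
  have hE0int : Integrable (fun u => Real.exp (-Φ u 0)) μ₀ := hEint 0 hr0
  have hc₀pos : 0 < ∫ u in T, Real.exp (-Φ u 0) ∂μ₀ := by
    rw [setIntegral_pos_iff_support_of_nonneg_ae
      (Filter.Eventually.of_forall fun u => (Real.exp_pos _).le) hE0int.integrableOn]
    have hsupp : Function.support (fun u : X => Real.exp (-Φ u 0)) = Set.univ := by
      ext u; simp [Function.mem_support, (Real.exp_pos (-Φ u 0)).ne']
    rw [hsupp, Set.univ_inter]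
    exact hTpos
  set Zmin := Real.exp (-(M₂ r R * r)) * ∫ u in T, Real.exp (-Φ u 0) ∂μ₀ with hZminDef
  have hZminpos : 0 < Zmin := mul_pos (Real.exp_pos _) hc₀pos
  have hZlb : ∀ y : Y, ‖y‖ ≤ r → Zmin ≤ Z y := by
    intro y hy
    have hstep : ∀ᵐ u ∂μ₀, u ∈ T →
        Real.exp (-(M₂ r R * r)) * Real.exp (-Φ u 0) ≤ Real.exp (-Φ u y) := by
      filter_upwards [hae_lip y 0 hy hr0] with u hu huT
      rw [← Real.exp_add]
      apply Real.exp_le_exp.2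
      have h4 : M₂ r ‖u‖ ≤ M₂ r R := hM₂mono r r ‖u‖ R le_rfl (hTnorm u huT)
      have h5 : ‖y - 0‖ ≤ r := by simpa using hy
      have h6 : |Φ u y - Φ u 0| ≤ M₂ r R * r := by
        calc |Φ u y - Φ u 0| ≤ M₂ r ‖u‖ * ‖y - 0‖ := hu
          _ ≤ M₂ r R * r := mul_le_mul h4 h5 (norm_nonneg _) (hM₂pos r R).le
      have h7 := abs_le.1 h6
      linarith [h7.1, h7.2]
    calc Zmin = ∫ u in T, Real.exp (-(M₂ r R * r)) * Real.exp (-Φ u 0) ∂μ₀ := by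
          rw [hZminDef, ← integral_const_mul]
      _ ≤ ∫ u in T, Real.exp (-Φ u y) ∂μ₀ :=
          setIntegral_mono_on_ae (hE0int.integrableOn.const_mul _)
            (hEint y hy).integrableOn hTmeas hstep
      _ ≤ ∫ u, Real.exp (-Φ u y) ∂μ₀ :=
          setIntegral_le_integral (hEint y hy)
            (Filter.Eventually.of_forall fun u => (Real.exp_pos _).le)
      _ = Z y := by rw [hZ]
  -- constants
  set I := ∫ u, Real.exp (M₁ r ‖u‖) * (M₂ r ‖u‖)^2 ∂μ₀ with hI
  have hI0 : 0 ≤ I := integral_nonneg fun u => by positivity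
  have hZmin2 : (0:ℝ) < 2*Zmin := by linarith
  have hZmin3 : (0:ℝ) < 2*Zmin^3 := by
    have := pow_pos hZminpos 3; linarith
  set A := I / (2*Zmin) + K * (I/m)^2 / (2*Zmin^3) with hA
  have hA0 : 0 ≤ A := by
    apply add_nonneg (div_nonneg hI0 hZmin2.le)
    exact div_nonneg (mul_nonneg hK0 (sq_nonneg _)) hZmin3.le
  refine ⟨Real.sqrt (A/2) + 1, add_pos_of_nonneg_of_pos (Real.sqrt_nonneg _) one_pos, ?_⟩
  intro y y' hy hy'
  set d := ‖y - y'‖ with hd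
  have hd0 : 0 ≤ d := norm_nonneg _
  -- bound on |Z y - Z y'|
  have hZdiff : |Z y - Z y'| ≤ (I/m) * d := by
    have hsub : Z y - Z y' = ∫ u, (Real.exp (-Φ u y) - Real.exp (-Φ u y')) ∂μ₀ := by
      rw [hZ]; exact (integral_sub (hEint y hy) (hEint y' hy')).symm
    rw [hsub]
    have hbint : Integrable (fun u : X => Real.exp (M₁ r ‖u‖) * M₂ r ‖u‖ * d) μ₀ :=
      hGM₂int.mul_const d
    calc |∫ u, (Real.exp (-Φ u y) - Real.exp (-Φ u y')) ∂μ₀|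
        ≤ ∫ u, |Real.exp (-Φ u y) - Real.exp (-Φ u y')| ∂μ₀ := by
          simpa [Real.norm_eq_abs] using
            norm_integral_le_integral_norm (fun u => Real.exp (-Φ u y) - Real.exp (-Φ u y'))
      _ ≤ ∫ u, Real.exp (M₁ r ‖u‖) * M₂ r ‖u‖ * d ∂μ₀ := by
          apply integral_mono_ae ((hEint y hy).sub (hEint y' hy')).abs hbint
          filter_upwards [hae_lb y hy, hae_lb y' hy', hae_lip y y' hy hy'] with u h1 h2 h3
          have h4 := exp_diff_le_aux 1 (M₁ r ‖u‖) (Φ u y) (Φ u y') zero_le_one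
            (by linarith) (by linarith)
          simp only [one_mul] at h4
          calc |Real.exp (-Φ u y) - Real.exp (-Φ u y')|
              ≤ Real.exp (M₁ r ‖u‖) * |Φ u y - Φ u y'| := h4
            _ ≤ Real.exp (M₁ r ‖u‖) * (M₂ r ‖u‖ * d) :=
                mul_le_mul_of_nonneg_left h3 (Real.exp_pos _).le
            _ = Real.exp (M₁ r ‖u‖) * M₂ r ‖u‖ * d := by ring
      _ = (∫ u, Real.exp (M₁ r ‖u‖) * M₂ r ‖u‖ ∂μ₀) * d := integral_mul_const _ _
      _ ≤ (I/m) * d := by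
          apply mul_le_mul_of_nonneg_right ?_ hd0
          have h5 : ∀ u : X, Real.exp (M₁ r ‖u‖) * M₂ r ‖u‖
              ≤ m⁻¹ * (Real.exp (M₁ r ‖u‖) * (M₂ r ‖u‖)^2) := by
            intro u
            have hMu := hM₂lb u
            have h2 : (Real.exp (M₁ r ‖u‖) * M₂ r ‖u‖) * m
                ≤ Real.exp (M₁ r ‖u‖) * (M₂ r ‖u‖)^2 := by
              calc (Real.exp (M₁ r ‖u‖) * M₂ r ‖u‖) * m
                  ≤ (Real.exp (M₁ r ‖u‖) * M₂ r ‖u‖) * M₂ r ‖u‖ :=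
                    mul_le_mul_of_nonneg_left hMu
                      (mul_nonneg (Real.exp_pos _).le (hM₂pos r _).le)
                _ = Real.exp (M₁ r ‖u‖) * (M₂ r ‖u‖)^2 := by ring
            calc Real.exp (M₁ r ‖u‖) * M₂ r ‖u‖
                = m⁻¹ * ((Real.exp (M₁ r ‖u‖) * M₂ r ‖u‖) * m) := by field_simp
              _ ≤ m⁻¹ * (Real.exp (M₁ r ‖u‖) * (M₂ r ‖u‖)^2) :=
                  mul_le_mul_of_nonneg_left h2 (by positivity)
          calc ∫ u, Real.exp (M₁ r ‖u‖) * M₂ r ‖u‖ ∂μ₀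
              ≤ ∫ u, m⁻¹ * (Real.exp (M₁ r ‖u‖) * (M₂ r ‖u‖)^2) ∂μ₀ :=
                integral_mono_ae hGM₂int (hInt2.const_mul _)
                  (Filter.Eventually.of_forall h5)
            _ = m⁻¹ * I := by rw [integral_const_mul, hI]
            _ = I/m := by rw [inv_mul_eq_div]
  -- rewrite posterior measures
  have hpost_eq : ∀ y0 : Y, μpost y0
      = μ₀.withDensity fun u => ENNReal.ofReal (Real.exp (-Φ u y0) / Z y0) := by
    intro y0; rw [hμpost]
  have hZypos : 0 < Z y := lt_of_lt_of_le hZminpos (hZlb y hy)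
  have hZy'pos : 0 < Z y' := lt_of_lt_of_le hZminpos (hZlb y' hy')
  rw [hpost_eq y, hpost_eq y',
    hellingerDist_withDensity μ₀ _ _ ((hEmeas y).div_const _) ((hEmeas y').div_const _)
      (fun u => div_pos (Real.exp_pos _) hZypos)
      (fun u => div_pos (Real.exp_pos _) hZy'pos)
      ((hEint y hy).div_const _) ((hEint y' hy').div_const _)]
  -- main integral bound
  have hmeas_lhs : Measurable (fun u =>
      (Real.sqrt (Real.exp (-Φ u y) / Z y) - Real.sqrt (Real.exp (-Φ u y') / Z y'))^2) := by
    apply Measurable.pow_const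
    exact (((hEmeas y).div_const _).sqrt).sub (((hEmeas y').div_const _).sqrt)
  have hRHSint : Integrable (fun u : X =>
      Real.exp (M₁ r ‖u‖) * (M₂ r ‖u‖)^2 * (d^2/(2*Zmin))
        + Real.exp (-Φ u y') * ((Z y - Z y')^2/(2*Zmin^3))) μ₀ :=
    (hInt2.mul_const _).add ((hEint y' hy').mul_const _)
  have hptwise : ∀ᵐ u ∂μ₀,
      (Real.sqrt (Real.exp (-Φ u y) / Z y) - Real.sqrt (Real.exp (-Φ u y') / Z y'))^2
      ≤ Real.exp (M₁ r ‖u‖) * (M₂ r ‖u‖)^2 * (d^2/(2*Zmin))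
        + Real.exp (-Φ u y') * ((Z y - Z y')^2/(2*Zmin^3)) := by
    filter_upwards [hae_lb y hy, hae_lb y' hy', hae_lip y y' hy hy'] with u h1 h2 h3
    refine le_trans (key_pointwise (Φ u y) (Φ u y') (M₁ r ‖u‖) (M₂ r ‖u‖) d
      (Z y) (Z y') Zmin hZminpos (hZlb y hy) (hZlb y' hy') h1 h2 hd0
      (hM₂pos r _).le h3) (le_of_eq (by ring))
  have hLHSint : Integrable (fun u =>
      (Real.sqrt (Real.exp (-Φ u y) / Z y) - Real.sqrt (Real.exp (-Φ u y') / Z y'))^2) μ₀ := by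
    refine hRHSint.mono' hmeas_lhs.aestronglyMeasurable ?_
    filter_upwards [hptwise] with u hu
    rwa [Real.norm_eq_abs, abs_of_nonneg (sq_nonneg _)]
  have hmain : ∫ u, (Real.sqrt (Real.exp (-Φ u y) / Z y)
        - Real.sqrt (Real.exp (-Φ u y') / Z y'))^2 ∂μ₀ ≤ A * d^2 := by
    have e1 : (Z y - Z y')^2 ≤ (I/m)^2 * d^2 := by
      have h7 := abs_le.1 hZdiff
      have := sq_le_sq' (by linarith [h7.1]) h7.2
      calc (Z y - Z y')^2 ≤ ((I/m)*d)^2 := this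
        _ = (I/m)^2 * d^2 := by ring
    have e2 : Z y' * ((Z y - Z y')^2/(2*Zmin^3)) ≤ K * ((I/m)^2*d^2/(2*Zmin^3)) := by
      apply mul_le_mul (hZle y' hy') (div_le_div_of_nonneg_right e1 hZmin3.le)
        (div_nonneg (sq_nonneg _) hZmin3.le) hK0
    calc ∫ u, (Real.sqrt (Real.exp (-Φ u y) / Z y)
          - Real.sqrt (Real.exp (-Φ u y') / Z y'))^2 ∂μ₀
        ≤ ∫ u, (Real.exp (M₁ r ‖u‖) * (M₂ r ‖u‖)^2 * (d^2/(2*Zmin))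
          + Real.exp (-Φ u y') * ((Z y - Z y')^2/(2*Zmin^3))) ∂μ₀ :=
          integral_mono_ae hLHSint hRHSint hptwise
      _ = I * (d^2/(2*Zmin)) + Z y' * ((Z y - Z y')^2/(2*Zmin^3)) := by
          rw [integral_add (hInt2.mul_const _) ((hEint y' hy').mul_const _),
            integral_mul_const, integral_mul_const, hI, hZ]
      _ ≤ I * (d^2/(2*Zmin)) + K * ((I/m)^2*d^2/(2*Zmin^3)) := by linarith [e2]
      _ = A * d^2 := by rw [hA]; ring
  calc Real.sqrt ((1/2) * ∫ u, (Real.sqrt (Real.exp (-Φ u y) / Z y)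
        - Real.sqrt (Real.exp (-Φ u y') / Z y'))^2 ∂μ₀)
      ≤ Real.sqrt ((A/2) * d^2) := Real.sqrt_le_sqrt (by linarith [hmain])
    _ = Real.sqrt (A/2) * d := by
        rw [Real.sqrt_mul (div_nonneg hA0 (by norm_num)) (d^2), Real.sqrt_sq hd0]
    _ ≤ (Real.sqrt (A/2) + 1) * d := by
        rw [add_mul, one_mul]
        exact le_add_of_nonneg_right hd0
end

section
/- If μ and μ′ are probability measures on X and f ∈ L²_μ ∩ L²_{μ′}, then |E^μ f − E^{μ′} f| ≤ 2 (E^μ|f|² + E^{μ′}|f|²)^{1/2} d_Hell(μ, μ′). -/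
open MeasureTheory

lemma my_cauchy_schwarz {X : Type*} [MeasurableSpace X] (ν : Measure X)
    {g h : X → ℝ} (hg : MemLp g 2 ν) (hh : MemLp h 2 ν) :
    |∫ x, g x * h x ∂ν| ≤ Real.sqrt (∫ x, g x ^ 2 ∂ν) * Real.sqrt (∫ x, h x ^ 2 ∂ν) := by
  set G := hg.toLp g
  set H := hh.toLp h
  have hinner : ∀ (F K : Lp ℝ 2 ν), (inner ℝ F K : ℝ) = ∫ x, F x * K x ∂ν := by
    intro F K
    rw [L2.inner_def]
    simp [RCLike.inner_apply, conj_trivial, mul_comm]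
  have hGg := hg.coeFn_toLp
  have hHh := hh.coeFn_toLp
  have h1 : (inner ℝ G H : ℝ) = ∫ x, g x * h x ∂ν := by
    rw [hinner]
    exact integral_congr_ae (hGg.mul hHh)
  have h2 : (inner ℝ G G : ℝ) = ∫ x, g x ^ 2 ∂ν := by
    rw [hinner]
    refine integral_congr_ae ?_
    filter_upwards [hGg] with x hx
    rw [hx]; ring
  have h3 : (inner ℝ H H : ℝ) = ∫ x, h x ^ 2 ∂ν := by
    rw [hinner]
    refine integral_congr_ae ?_
    filter_upwards [hHh] with x hx
    rw [hx]; ring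
  have hG : ‖G‖ = Real.sqrt (∫ x, g x ^ 2 ∂ν) := by
    rw [← h2, real_inner_self_eq_norm_sq, Real.sqrt_sq (norm_nonneg _)]
  have hH : ‖H‖ = Real.sqrt (∫ x, h x ^ 2 ∂ν) := by
    rw [← h3, real_inner_self_eq_norm_sq, Real.sqrt_sq (norm_nonneg _)]
  calc |∫ x, g x * h x ∂ν| = |(inner ℝ G H : ℝ)| := by rw [h1]
    _ ≤ ‖G‖ * ‖H‖ := abs_real_inner_le_norm G H
    _ = _ := by rw [hG, hH]


/-- **Hellinger distance controls differences of expectations.**  If `μ, μ'` are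
probability measures on `X` and `f ∈ L²_μ ∩ L²_{μ'}`, then
`|E^μ f − E^{μ'} f| ≤ 2 (E^μ |f|² + E^{μ'} |f|²)^{1/2} d_Hell(μ, μ')`. -/
theorem abs_integral_sub_le_hellinger
    (X : Type*) [MeasurableSpace X]
    (μ μ' : Measure X) [IsProbabilityMeasure μ] [IsProbabilityMeasure μ']
    (f : X → ℝ) (hf : Measurable f)
    (hf2 : Integrable (fun x => |f x| ^ 2) μ) (hf2' : Integrable (fun x => |f x| ^ 2) μ') :
    |∫ x, f x ∂μ - ∫ x, f x ∂μ'| ≤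
      2 * Real.sqrt ((∫ x, |f x| ^ 2 ∂μ) + ∫ x, |f x| ^ 2 ∂μ') * hellingerDist μ μ' := by
  simp_rw [sq_abs] at hf2 hf2' ⊢
  set ν : Measure X := μ + μ' with hν
  have hac : μ ≪ ν := Measure.absolutelyContinuous_of_le (Measure.le_add_right le_rfl)
  have hac' : μ' ≪ ν := Measure.absolutelyContinuous_of_le (Measure.le_add_left le_rfl)
  set p : X → ℝ := fun x => (μ.rnDeriv ν x).toReal with hpdef
  set q : X → ℝ := fun x => (μ'.rnDeriv ν x).toReal with hqdef
  have hpm : Measurable p := (Measure.measurable_rnDeriv μ ν).ennreal_toReal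
  have hqm : Measurable q := (Measure.measurable_rnDeriv μ' ν).ennreal_toReal
  have hp0 : ∀ x, 0 ≤ p x := fun x => ENNReal.toReal_nonneg
  have hq0 : ∀ x, 0 ≤ q x := fun x => ENNReal.toReal_nonneg
  -- f is integrable
  have hfint : Integrable f μ :=
    ((memLp_two_iff_integrable_sq hf.aestronglyMeasurable).mpr hf2).integrable one_le_two
  have hfint' : Integrable f μ' :=
    ((memLp_two_iff_integrable_sq hf.aestronglyMeasurable).mpr hf2').integrable one_le_two
  -- transfer integrals to ν
  have hIp : ∫ x, p x * f x ∂ν = ∫ x, f x ∂μ := by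
    simpa [smul_eq_mul] using integral_rnDeriv_smul hac (f := f)
  have hIq : ∫ x, q x * f x ∂ν = ∫ x, f x ∂μ' := by
    simpa [smul_eq_mul] using integral_rnDeriv_smul hac' (f := f)
  have hIp2 : ∫ x, p x * f x ^ 2 ∂ν = ∫ x, f x ^ 2 ∂μ := by
    simpa [smul_eq_mul] using integral_rnDeriv_smul hac (f := fun x => f x ^ 2)
  have hIq2 : ∫ x, q x * f x ^ 2 ∂ν = ∫ x, f x ^ 2 ∂μ' := by
    simpa [smul_eq_mul] using integral_rnDeriv_smul hac' (f := fun x => f x ^ 2)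
  -- integrability over ν
  have hintp1 : Integrable (fun x => p x * f x) ν := by
    simpa [smul_eq_mul] using (integrable_rnDeriv_smul_iff hac (f := f)).mpr hfint
  have hintq1 : Integrable (fun x => q x * f x) ν := by
    simpa [smul_eq_mul] using (integrable_rnDeriv_smul_iff hac' (f := f)).mpr hfint'
  have hintp2 : Integrable (fun x => p x * f x ^ 2) ν := by
    simpa [smul_eq_mul] using
      (integrable_rnDeriv_smul_iff hac (f := fun x => f x ^ 2)).mpr hf2
  have hintq2 : Integrable (fun x => q x * f x ^ 2) ν := by
    simpa [smul_eq_mul] using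
      (integrable_rnDeriv_smul_iff hac' (f := fun x => f x ^ 2)).mpr hf2'
  have hintp : Integrable p ν := Measure.integrable_toReal_rnDeriv
  have hintq : Integrable q ν := Measure.integrable_toReal_rnDeriv
  -- the two L² functions
  set g : X → ℝ := fun x => f x * (Real.sqrt (p x) + Real.sqrt (q x)) with hgdef
  set h : X → ℝ := fun x => Real.sqrt (p x) - Real.sqrt (q x) with hhdef
  have hgm : Measurable g := hf.mul (hpm.sqrt.add hqm.sqrt)
  have hhm : Measurable h := hpm.sqrt.sub hqm.sqrt
  have hsq : ∀ x, Real.sqrt (p x) ^ 2 = p x := fun x => Real.sq_sqrt (hp0 x)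
  have hsq' : ∀ x, Real.sqrt (q x) ^ 2 = q x := fun x => Real.sq_sqrt (hq0 x)
  -- bound g²
  have hgsq_le : ∀ x, g x ^ 2 ≤ 2 * (p x * f x ^ 2 + q x * f x ^ 2) := by
    intro x
    have h1 := hsq x; have h2 := hsq' x
    have h3 := Real.sqrt_nonneg (p x); have h4 := Real.sqrt_nonneg (q x)
    have hf2x : (0:ℝ) ≤ f x ^ 2 := sq_nonneg _
    simp only [hgdef]
    nlinarith [sq_nonneg (Real.sqrt (p x) - Real.sqrt (q x)),
      sq_nonneg (f x * (Real.sqrt (p x) - Real.sqrt (q x))),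
      mul_nonneg hf2x (sq_nonneg (Real.sqrt (p x) - Real.sqrt (q x)))]
  have hhsq_le : ∀ x, h x ^ 2 ≤ 2 * (p x + q x) := by
    intro x
    have h1 := hsq x; have h2 := hsq' x
    have h3 := Real.sqrt_nonneg (p x); have h4 := Real.sqrt_nonneg (q x)
    simp only [hhdef]
    nlinarith [sq_nonneg (Real.sqrt (p x) + Real.sqrt (q x))]
  have hgsqint : Integrable (fun x => g x ^ 2) ν := by
    refine Integrable.mono' (((hintp2.add hintq2).const_mul 2)) (hgm.pow_const 2).aestronglyMeasurable ?_
    filter_upwards with x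
    rw [Real.norm_eq_abs, abs_of_nonneg (sq_nonneg _)]
    exact hgsq_le x
  have hhsqint : Integrable (fun x => h x ^ 2) ν := by
    refine Integrable.mono' (((hintp.add hintq).const_mul 2)) (hhm.pow_const 2).aestronglyMeasurable ?_
    filter_upwards with x
    rw [Real.norm_eq_abs, abs_of_nonneg (sq_nonneg _)]
    exact hhsq_le x
  have hgL2 : MemLp g 2 ν := (memLp_two_iff_integrable_sq hgm.aestronglyMeasurable).mpr hgsqint
  have hhL2 : MemLp h 2 ν := (memLp_two_iff_integrable_sq hhm.aestronglyMeasurable).mpr hhsqint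
  -- the key identity
  have hgh : ∀ x, g x * h x = p x * f x - q x * f x := by
    intro x
    have h1 := hsq x; have h2 := hsq' x
    simp only [hgdef, hhdef]
    have key : (Real.sqrt (p x) + Real.sqrt (q x)) * (Real.sqrt (p x) - Real.sqrt (q x))
        = Real.sqrt (p x) ^ 2 - Real.sqrt (q x) ^ 2 := by ring
    rw [h1, h2] at key
    rw [mul_assoc, key]
    ring
  have hI : ∫ x, f x ∂μ - ∫ x, f x ∂μ' = ∫ x, g x * h x ∂ν := by
    rw [← hIp, ← hIq, ← integral_sub hintp1 hintq1]
    exact integral_congr_ae (Filter.Eventually.of_forall fun x => (hgh x).symm)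
  set A : ℝ := (∫ x, f x ^ 2 ∂μ) + ∫ x, f x ^ 2 ∂μ' with hAdef
  have hA0 : 0 ≤ A := by
    have := integral_nonneg (f := fun x => f x ^ 2) (fun x => sq_nonneg (f x)) (μ := μ)
    have := integral_nonneg (f := fun x => f x ^ 2) (fun x => sq_nonneg (f x)) (μ := μ')
    positivity
  -- bound on ∫ g²
  have hg2le : ∫ x, g x ^ 2 ∂ν ≤ 2 * A := by
    have : ∫ x, g x ^ 2 ∂ν ≤ ∫ x, 2 * (p x * f x ^ 2 + q x * f x ^ 2) ∂ν :=
      integral_mono hgsqint ((hintp2.add hintq2).const_mul 2) hgsq_le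
    calc ∫ x, g x ^ 2 ∂ν ≤ ∫ x, 2 * (p x * f x ^ 2 + q x * f x ^ 2) ∂ν := this
      _ = 2 * ((∫ x, p x * f x ^ 2 ∂ν) + ∫ x, q x * f x ^ 2 ∂ν) := by
          rw [integral_const_mul, integral_add hintp2 hintq2]
      _ = 2 * A := by rw [hIp2, hIq2]
  have hg20 : 0 ≤ ∫ x, g x ^ 2 ∂ν := integral_nonneg fun x => sq_nonneg _
  have hh20 : 0 ≤ ∫ x, h x ^ 2 ∂ν := integral_nonneg fun x => sq_nonneg _
  -- relate to Hellinger distance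
  have hHell : Real.sqrt (∫ x, h x ^ 2 ∂ν) = Real.sqrt 2 * hellingerDist μ μ' := by
    rw [hellingerDist, ← Real.sqrt_mul (by norm_num : (0:ℝ) ≤ 2)]
    congr 1
    simp only [hhdef, ← hν, ← hpdef, ← hqdef]
    ring
  have hd0 : 0 ≤ hellingerDist μ μ' := Real.sqrt_nonneg _
  calc |∫ x, f x ∂μ - ∫ x, f x ∂μ'| = |∫ x, g x * h x ∂ν| := by rw [hI]
    _ ≤ Real.sqrt (∫ x, g x ^ 2 ∂ν) * Real.sqrt (∫ x, h x ^ 2 ∂ν) :=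
        my_cauchy_schwarz ν hgL2 hhL2
    _ ≤ Real.sqrt (2 * A) * (Real.sqrt 2 * hellingerDist μ μ') := by
        rw [← hHell]
        exact mul_le_mul_of_nonneg_right (Real.sqrt_le_sqrt hg2le) (Real.sqrt_nonneg _)
    _ = 2 * Real.sqrt A * hellingerDist μ μ' := by
        rw [Real.sqrt_mul (by norm_num : (0:ℝ) ≤ 2)]
        rw [show Real.sqrt 2 * Real.sqrt A * (Real.sqrt 2 * hellingerDist μ μ')
            = (Real.sqrt 2 * Real.sqrt 2) * Real.sqrt A * hellingerDist μ μ' by ring,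
          Real.mul_self_sqrt (by norm_num : (0:ℝ) ≤ 2)]
end
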